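/- Let L be a non-contractible compact metric ANR, X a non-empty compact Fréchet space, Y a non-empty compact space, and B a closed subspace of X. Let z ∈ H(μ) ⊆ Z(X,Y) be any point such that c = π_X(z) ∈ B and L-Ind_{c+} B ≥ 1. If L-Ind_{b+} X ≥ α for each b ∈ B, then L-Ind_{z+} Z(X,Y) ≥ min{α, L-Ind Y} + 1. -/

import Mathlib

open Set Topology Cardinal

noncomputable section

attribute [local instance] Classical.propDecidable

/-- Values of dimension functions: `⊥ : WithBot Ordinal.{0}` encodes `−1`,
ordinals are the usual values, and `⊤` encodes `∞`. -/
abbrev Dim : Type 1 := WithTop (WithBot Ordinal.{0})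

/-- An ordinal viewed as a dimension value. -/
def Dim.ofOrdinal (a : Ordinal.{0}) : Dim := ((a : WithBot Ordinal.{0}) : Dim)

/-- The dimension value `−1`. -/
def Dim.minusOne : Dim := ((⊥ : WithBot Ordinal.{0}) : Dim)

/-- An integer `m ≥ −1` viewed as a dimension value. -/
def Dim.ofInt (m : ℤ) : Dim := if 0 ≤ m then Dim.ofOrdinal m.toNat else Dim.minusOne

/-- `A` is a `K`-tuple for the simplicial complex `K` on the vertex set `Fin m`:
whenever the members indexed by a nonempty `I` have a common point, `I` spans a
simplex of `K`. -/
def IsKTuple {m : ℕ} (K : Finset (Fin m) → Prop) {X : Type} (A : Fin m → Set X) : Prop :=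
  ∀ I : Finset (Fin m), I.Nonempty → (⋂ i ∈ I, A i).Nonempty → K I

/-- `K` is an abstract (finite) simplicial complex with vertex set `Fin m`:
it is closed under passing to nonempty subsets, and contains every vertex. -/
def IsComplex {m : ℕ} (K : Finset (Fin m) → Prop) : Prop :=
  (∀ s t : Finset (Fin m), s ⊆ t → s.Nonempty → K t → K s) ∧ ∀ i, K {i}

/-- The boundary complex `∂Δ^k` of the `k`-simplex: all proper subsets of the
`k+1` vertices span simplices. -/
def bComplex (k : ℕ) : Finset (Fin (k + 1)) → Prop := fun s => s ≠ Finset.univ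

/-- `U` is an (open) `K`-neighbourhood of the tuple `F`. -/
def KNbhd {m : ℕ} (K : Finset (Fin m) → Prop) {X : Type} [TopologicalSpace X]
    (F U : Fin m → Set X) : Prop :=
  (∀ i, IsOpen (U i)) ∧ IsKTuple K U ∧ ∀ i, F i ⊆ U i

/-- Auxiliary form of `K-Ind X ≤ α`, defined by transfinite recursion on `α`:
every closed `K`-tuple has a `K`-neighbourhood whose corresponding `K`-partition
is either empty (dimension `−1`) or has `K-Ind < α`. -/
def KIndLeAux {m : ℕ} (K : Finset (Fin m) → Prop) :
    Ordinal.{0} → ∀ X : Type, TopologicalSpace X → Prop :=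
  (wellFounded_lt (α := Ordinal.{0})).fix fun α rec X tX =>
    letI := tX
    ∀ F : Fin m → Set X, (∀ i, IsClosed (F i)) → IsKTuple K F →
      ∃ U : Fin m → Set X, (∀ i, IsOpen (U i)) ∧ IsKTuple K U ∧ (∀ i, F i ⊆ U i) ∧
        ((⋃ i, U i)ᶜ = (∅ : Set X) ∨
          ∃ β : Set.Iio α, rec β.1 β.2 (↥((⋃ i, U i)ᶜ)) inferInstance)

/-- `K-Ind X ≤ α` (for an ordinal `α ≥ 0`). -/
def KIndLE {m : ℕ} (K : Finset (Fin m) → Prop) (X : Type) [tX : TopologicalSpace X]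
    (α : Ordinal.{0}) : Prop :=
  KIndLeAux K α X tX

/-- Fedorchuk's inductive dimension `K-Ind` modulo a simplicial complex `K`;
`−1` for the empty space, the least `α` with `K-Ind X ≤ α` otherwise, `∞` if none. -/
def KInd {m : ℕ} (K : Finset (Fin m) → Prop) (X : Type) [TopologicalSpace X] : Dim :=
  if IsEmpty X then Dim.minusOne
  else if ∃ α, KIndLE K X α then Dim.ofOrdinal (sInf {α | KIndLE K X α}) else ⊤

/-- The set of `K`-obstruction points of an open `K`-tuple `U`: points covered
by no `K`-neighbourhood of `U`. -/
def KObs {m : ℕ} (K : Finset (Fin m) → Prop) {X : Type} [TopologicalSpace X]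
    (U : Fin m → Set X) : Set X :=
  {x | ¬ ∃ V : Fin m → Set X, KNbhd K U V ∧ x ∈ ⋃ i, V i}

/-- `X` is strongly `α`-dimensional: `K-Ind X` is a positive ordinal `α` and some
closed `K`-tuple admits no `K`-neighbourhood `U` without obstruction points whose
corresponding `K`-partition has `K-Ind < α`. -/
def KStrongly {m : ℕ} (K : Finset (Fin m) → Prop) (X : Type) [TopologicalSpace X] : Prop :=
  (∃ α : Ordinal.{0}, 0 < α ∧ KInd K X = Dim.ofOrdinal α) ∧
  ∃ F : Fin m → Set X, (∀ i, IsClosed (F i)) ∧ IsKTuple K F ∧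
    ∀ U : Fin m → Set X, KNbhd K F U →
      KInd K (↥((⋃ i, U i)ᶜ)) < KInd K X → KObs K U ≠ ∅

/-- The dimensional strength degree `K-str X ∈ {0,1}`. -/
def KStr {m : ℕ} (K : Finset (Fin m) → Prop) (X : Type) [TopologicalSpace X] : ℕ :=
  if KStrongly K X then 1 else 0

/-- `K-dim X ≤ n`: any `n+1` closed `K`-tuples admit `K`-partitions with empty
intersection. -/
def KDimLE {m : ℕ} (K : Finset (Fin m) → Prop) (X : Type) [TopologicalSpace X] (n : ℕ) : Prop :=
  ∀ F : Fin (n + 1) → Fin m → Set X,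
    (∀ j i, IsClosed (F j i)) → (∀ j, IsKTuple K (F j)) →
    ∃ U : Fin (n + 1) → Fin m → Set X, (∀ j, KNbhd K (F j) (U j)) ∧
      (⋂ j, (⋃ i, U j i)ᶜ) = (∅ : Set X)

/-- Fedorchuk's dimension `K-dim` modulo a simplicial complex `K`. -/
def KDim {m : ℕ} (K : Finset (Fin m) → Prop) (X : Type) [TopologicalSpace X] : Dim :=
  if IsEmpty X then Dim.minusOne
  else if ∃ n, KDimLE K X n then Dim.ofOrdinal ((sInf {n | KDimLE K X n} : ℕ) : Ordinal.{0}) else ⊤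

/-- `dim X ≤ n` for the Lebesgue covering dimension: every finite open cover has
an open shrinking of order at most `n+1`. -/
def CovDimLE (X : Type) [TopologicalSpace X] (n : ℕ) : Prop :=
  ∀ (ι : Type), Finite ι → ∀ U : ι → Set X, (∀ i, IsOpen (U i)) → (⋃ i, U i) = Set.univ →
    ∃ V : ι → Set X, (∀ i, IsOpen (V i)) ∧ (∀ i, V i ⊆ U i) ∧ (⋃ i, V i) = Set.univ ∧
      ∀ x : X, ({i | x ∈ V i}).ncard ≤ n + 1

/-- The Lebesgue covering dimension. -/
def covDim (X : Type) [TopologicalSpace X] : Dim :=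
  if IsEmpty X then Dim.minusOne
  else if ∃ n, CovDimLE X n then Dim.ofOrdinal ((sInf {n | CovDimLE X n} : ℕ) : Ordinal.{0}) else ⊤

/-- `Ind X ≤ n` for the large inductive dimension, by recursion on `n`. -/
def IndLE : ℕ → ∀ X : Type, TopologicalSpace X → Prop
  | 0, X, tX =>
    letI := tX
    ∀ F U : Set X, IsClosed F → IsOpen U → F ⊆ U →
      ∃ V : Set X, IsOpen V ∧ F ⊆ V ∧ V ⊆ U ∧ frontier V = ∅
  | n + 1, X, tX =>
    letI := tX
    ∀ F U : Set X, IsClosed F → IsOpen U → F ⊆ U →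
      ∃ V : Set X, IsOpen V ∧ F ⊆ V ∧ V ⊆ U ∧ IndLE n (↥(frontier V)) inferInstance

/-- The large inductive dimension `Ind`. -/
def IndDim (X : Type) [tX : TopologicalSpace X] : Dim :=
  if IsEmpty X then Dim.minusOne
  else if ∃ n, IndLE n X tX then Dim.ofOrdinal ((sInf {n | IndLE n X tX} : ℕ) : Ordinal.{0}) else ⊤

/-- The relation generating the topological join `A ∗ B`: the copy of `B` is
collapsed at parameter `0`, the copy of `A` at parameter `1`. -/
def JoinRel (A B : Type) : (A × B × unitInterval) → (A × B × unitInterval) → Prop :=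
  fun p q => (p.2.2 = 0 ∧ q.2.2 = 0 ∧ p.1 = q.1) ∨ (p.2.2 = 1 ∧ q.2.2 = 1 ∧ p.2.1 = q.2.1)

/-- The topological join `A ∗ B`. -/
abbrev Join (A B : Type) [TopologicalSpace A] [TopologicalSpace B] : Type :=
  Quot (JoinRel A B)

/-- Auxiliary construction of the join of `n+1` copies of `L`, bundled with its
topology. -/
def JoinPowAux (L : Type) (tL : TopologicalSpace L) : ℕ → (T : Type) × TopologicalSpace T
  | 0 => ⟨L, tL⟩
  | n + 1 =>
    let p := JoinPowAux L tL n
    letI := tL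
    letI := p.2
    ⟨Join L p.1, inferInstance⟩

/-- The join `L ∗ ⋯ ∗ L` of `n+1` copies of `L`. -/
def JoinPow (L : Type) [tL : TopologicalSpace L] (n : ℕ) : Type :=
  (JoinPowAux L tL n).1

instance joinPowTopologicalSpace (L : Type) [tL : TopologicalSpace L] (n : ℕ) :
    TopologicalSpace (JoinPow L n) :=
  (JoinPowAux L tL n).2

/-- `L-dim X ≤ n`: every continuous map from a closed subset of `X` to the join
of `n+1` copies of `L` extends continuously over `X`. -/
def LDimLE (L : Type) [TopologicalSpace L] (X : Type) [TopologicalSpace X] (n : ℕ) : Prop :=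
  ∀ F : Set X, IsClosed F → ∀ f : C(F, JoinPow L n),
    ∃ g : C(X, JoinPow L n), ∀ x : F, g x = f x

/-- Fedorchuk's dimension `L-dim` modulo an ANR `L`. -/
def LDim (L : Type) [TopologicalSpace L] (X : Type) [TopologicalSpace X] : Dim :=
  if IsEmpty X then Dim.minusOne
  else if ∃ n, LDimLE L X n then Dim.ofOrdinal ((sInf {n | LDimLE L X n} : ℕ) : Ordinal.{0}) else ⊤

/-- Auxiliary form of `L-Ind X ≤ α`, by transfinite recursion on `α`: every map
to `L` from a closed subset of `X` has an `L`-partition which is either empty or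
has `L-Ind < α`. -/
def LIndLeAux (L : Type) [TopologicalSpace L] :
    Ordinal.{0} → ∀ X : Type, TopologicalSpace X → Prop :=
  (wellFounded_lt (α := Ordinal.{0})).fix fun α rec X tX =>
    letI := tX
    ∀ F : Set X, IsClosed F → ∀ f : C(F, L),
      ∃ U : Set X, IsOpen U ∧ ∃ hFU : F ⊆ U,
        (∃ g : C(U, L), ∀ (x : X) (hx : x ∈ F), g ⟨x, hFU hx⟩ = f ⟨x, hx⟩) ∧
        (Uᶜ = (∅ : Set X) ∨ ∃ β : Set.Iio α, rec β.1 β.2 (↥(Uᶜ)) inferInstance)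

/-- `L-Ind X ≤ α` (for an ordinal `α ≥ 0`). -/
def LIndLE (L : Type) [TopologicalSpace L] (X : Type) [tX : TopologicalSpace X]
    (α : Ordinal.{0}) : Prop :=
  LIndLeAux L α X tX

/-- Fedorchuk's inductive dimension `L-Ind` modulo an ANR `L`. -/
def LInd (L : Type) [TopologicalSpace L] (X : Type) [TopologicalSpace X] : Dim :=
  if IsEmpty X then Dim.minusOne
  else if ∃ α, LIndLE L X α then Dim.ofOrdinal (sInf {α | LIndLE L X α}) else ⊤

/-- `L` is an absolute neighbourhood retract (for metric spaces): `L` is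
metrizable and whenever a closed subset `A` of a metric space is homeomorphic to
`L` via `e`, the map `e` extends continuously over a neighbourhood of `A`. -/
def IsANR (L : Type) [TopologicalSpace L] : Prop :=
  TopologicalSpace.MetrizableSpace L ∧
  ∀ (M : Type) [MetricSpace M], ∀ A : Set M, IsClosed A → ∀ e : A ≃ₜ L,
    ∃ U : Set M, IsOpen U ∧ ∃ hAU : A ⊆ U, ∃ r : C(U, L),
      ∀ (a : M) (ha : a ∈ A), r ⟨a, hAU ha⟩ = e ⟨a, ha⟩

/-- `L-Ind_{b+} X`: the least dimension value `d` such that some open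
neighbourhood of `b` has closure of `L-Ind` at most `d`. -/
def LIndPlus (L : Type) [TopologicalSpace L] {X : Type} [TopologicalSpace X] (b : X) : Dim :=
  sInf {d : Dim | ∃ U : Set X, IsOpen U ∧ b ∈ U ∧ LInd L (↥(closure U)) ≤ d}

/-- The set `K(X) = {b ∈ X : L-Ind_{b+} X = L-Ind X}`. -/
def LKset (L : Type) [TopologicalSpace L] (X : Type) [TopologicalSpace X] : Set X :=
  {b | LIndPlus L b = LInd L X}

/-- The weight of a topological space: the least cardinality of a basis. -/
def tWeight (X : Type) [TopologicalSpace X] : Cardinal :=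
  sInf {c | ∃ B : Set (Set X), TopologicalSpace.IsTopologicalBasis B ∧ #B = c}

/-- The family `𝒮_X` of all subsets of `X` that are finite or homeomorphic to the
one-point compactification `A_{ℵ₀}` of a countably infinite discrete space. -/
def SFam (X : Type) [TopologicalSpace X] : Set (Set X) :=
  {S | S.Finite ∨ Nonempty (↥S ≃ₜ OnePoint ℕ)}

/-- The relation generating the quotient `N` in the `Z(X,Y)` construction:
each set `{μ} × {x} × Y` is collapsed to a point. -/
def ZRel (ι X Y : Type) : (OnePoint ι × X × Y) → (OnePoint ι × X × Y) → Prop :=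
  fun p q => p.1 = OnePoint.infty ∧ q.1 = OnePoint.infty ∧ p.2.1 = q.2.1

/-- The quotient space `N` of `A_𝔪 × X × Y`. -/
abbrev ZQuot (ι X Y : Type) [TopologicalSpace ι] [TopologicalSpace X] [TopologicalSpace Y] :
    Type :=
  Quot (ZRel ι X Y)

/-- The subset `Z(X,Y) = ⋃_{α ∈ A_𝔪} H(α)` of `N`:  `H(μ) = π₁({μ} × X × Y)` and
`H(α) = π₁({α} × φ(α) × Y)` for `α ≠ μ`. -/
def ZSet (ι X Y : Type) [TopologicalSpace ι] [TopologicalSpace X] [TopologicalSpace Y]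
    (φ : ι → Set X) : Set (ZQuot ι X Y) :=
  {z | ∃ p : OnePoint ι × X × Y, Quot.mk (ZRel ι X Y) p = z ∧
        (p.1 = OnePoint.infty ∨ ∃ i : ι, p.1 = (i : OnePoint ι) ∧ p.2.1 ∈ φ i)}

/-- The space `Z(X,Y)` (for the data `ι`, `φ`), with the subspace topology. -/
abbrev ZSpace (ι X Y : Type) [TopologicalSpace ι] [TopologicalSpace X] [TopologicalSpace Y]
    (φ : ι → Set X) : Type :=
  ↥(ZSet ι X Y φ)

/-- The subset `H(μ)` of `Z(X,Y)`. -/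
def ZHmu (ι X Y : Type) [TopologicalSpace ι] [TopologicalSpace X] [TopologicalSpace Y]
    (φ : ι → Set X) : Set (ZSpace ι X Y φ) :=
  {z | ∃ (x : X) (y : Y), (z : ZQuot ι X Y) = Quot.mk (ZRel ι X Y) (OnePoint.infty, x, y)}

/-- The projection `π_X : N → X`, `π₁(α,x,y) ↦ x`. -/
def ZQuotProjX {ι X Y : Type} [TopologicalSpace ι] [TopologicalSpace X] [TopologicalSpace Y] :
    ZQuot ι X Y → X :=
  Quot.lift (fun p => p.2.1) (fun _ _ h => h.2.2)

/-- The projection `π_X : Z(X,Y) → X`. -/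
def ZProjX {ι X Y : Type} [TopologicalSpace ι] [TopologicalSpace X] [TopologicalSpace Y]
    (φ : ι → Set X) : ZSpace ι X Y φ → X :=
  fun z => ZQuotProjX (z : ZQuot ι X Y)

/-- The cardinality requirements on the index set `ι` (of cardinality `𝔪`) in the
`Z(X,Y)` construction: `𝔪 ≥ max {ℵ₀, (wX)⁺, (wY)⁺, card 𝒮_X}`. -/
def ZCardOK (X Y ι : Type) [TopologicalSpace X] [TopologicalSpace Y] : Prop :=
  ℵ₀ ≤ #ι ∧ tWeight X < #ι ∧ tWeight Y < #ι ∧ #(SFam X) ≤ #ι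

/-- The requirements on `φ : A_𝔪 \ {μ} → 𝒮_X`: it takes values in `𝒮_X` and every
fibre has cardinality `𝔪`. -/
def ZPhiOK {X ι : Type} [TopologicalSpace X] (φ : ι → Set X) : Prop :=
  (∀ i, φ i ∈ SFam X) ∧ ∀ S ∈ SFam X, #(↥(φ ⁻¹' {S})) = #ι



-- ===================== AUXILIARY LEMMAS =====================

section Helpers

theorem lindLE_iff (L : Type) [TopologicalSpace L] (X : Type) [tX : TopologicalSpace X]
    (α : Ordinal.{0}) :
    LIndLE L X α ↔
      ∀ F : Set X, IsClosed F → ∀ f : C(F, L),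
        ∃ U : Set X, IsOpen U ∧ ∃ hFU : F ⊆ U,
          (∃ g : C(U, L), ∀ (x : X) (hx : x ∈ F), g ⟨x, hFU hx⟩ = f ⟨x, hx⟩) ∧
          (Uᶜ = (∅ : Set X) ∨ ∃ β : Set.Iio α, LIndLE L (↥(Uᶜ)) β.1) := by
  unfold LIndLE LIndLeAux
  rw [WellFounded.fix_eq]

theorem lindLE_of_closedEmbedding (L : Type) [TopologicalSpace L] (γ : Ordinal.{0}) :
    ∀ (A B : Type) (tA : TopologicalSpace A) (tB : TopologicalSpace B)
      (e : A → B), IsClosedEmbedding e → LIndLE L B γ → LIndLE L A γ := by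
  induction γ using Ordinal.induction with
  | _ γ IH =>
  intro A B tA tB e he hB
  rw [lindLE_iff] at hB ⊢
  intro F hF f
  have hF' : IsClosed (e '' F) := he.isClosedMap _ hF
  let E : A ≃ₜ Set.range e := he.toIsEmbedding.toHomeomorph
  have hmem : ∀ y : ↥(e '' F), (y : B) ∈ Set.range e := fun y => image_subset_range e F y.2
  have hr : ∀ y : ↥(e '' F), (E.symm ⟨(y : B), hmem y⟩) ∈ F := by
    rintro ⟨y, hy⟩
    obtain ⟨x, hxF, rfl⟩ := hy
    have : (⟨e x, hmem ⟨e x, mem_image_of_mem e hxF⟩⟩ : Set.range e) = E x := by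
      apply Subtype.ext; rfl
    simpa [this] using hxF
  let r : C(↥(e '' F), ↥F) :=
    ⟨fun y => ⟨E.symm ⟨(y : B), hmem y⟩, hr y⟩, by
      apply Continuous.subtype_mk
      exact E.symm.continuous.comp (continuous_subtype_val.subtype_mk _)⟩
  have hrx : ∀ (x : A) (hx : x ∈ F) (p : e x ∈ e '' F), r ⟨e x, p⟩ = ⟨x, hx⟩ := by
    intro x hx p
    apply Subtype.ext
    show E.symm ⟨e x, _⟩ = x
    have : (⟨e x, hmem ⟨e x, p⟩⟩ : Set.range e) = E x := by apply Subtype.ext; rfl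
    rw [this, Homeomorph.symm_apply_apply]
  obtain ⟨U', hU'open, hFU', ⟨g', hg'⟩, hbranch⟩ := hB (e '' F) hF' (f.comp r)
  refine ⟨e ⁻¹' U', hU'open.preimage he.continuous,
    fun x hx => hFU' (mem_image_of_mem e hx), ?_, ?_⟩
  · refine ⟨g'.comp ⟨fun x => ⟨e x.1, x.2⟩,
      (he.continuous.comp continuous_subtype_val).subtype_mk _⟩, ?_⟩
    intro x hx
    have := hg' (e x) (mem_image_of_mem e hx)
    simp only [ContinuousMap.comp_apply] at this ⊢
    rw [hrx x hx] at this
    exact this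
  · rcases hbranch with h | ⟨β, hβ⟩
    · left
      rw [← Set.preimage_compl, h, Set.preimage_empty]
    · right
      refine ⟨β, ?_⟩
      have he2 : IsClosedEmbedding ((U'ᶜ).restrictPreimage e) := he.restrictPreimage _
      exact IH β.1 β.2 _ _ _ _ _ he2 hβ

theorem not_lindLE_of_isEmpty (L : Type) [TopologicalSpace L] (hL : IsEmpty L)
    (γ : Ordinal.{0}) :
    ∀ (X : Type) (tX : TopologicalSpace X), Nonempty X → ¬ LIndLE L X γ := by
  induction γ using Ordinal.induction with
  | _ γ IH =>
  intro X tX hX h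
  rw [lindLE_iff] at h
  obtain ⟨U, -, hFU, ⟨g, -⟩, hbranch⟩ :=
    h ∅ isClosed_empty ⟨fun x => absurd x.2 (notMem_empty _), continuous_of_const fun a => absurd a.2 (notMem_empty _)⟩
  have hUempty : U = ∅ := by
    by_contra hne
    obtain ⟨u, hu⟩ := nonempty_iff_ne_empty.mpr hne
    exact hL.false (g ⟨u, hu⟩)
  rcases hbranch with h0 | ⟨β, hβ⟩
  · rw [hUempty, Set.compl_empty] at h0
    obtain ⟨x⟩ := hX
    exact (Set.eq_empty_iff_forall_notMem.mp h0 x) trivial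
  · have : Nonempty ↥(Uᶜ) := by
      obtain ⟨x⟩ := hX
      exact ⟨⟨x, by rw [hUempty]; exact fun hx => hx⟩⟩
    exact IH β.1 β.2 _ _ this hβ

theorem lindLE_mono {L : Type} [TopologicalSpace L] {X : Type} [TopologicalSpace X]
    {γ γ' : Ordinal.{0}} (h : γ ≤ γ') (hX : LIndLE L X γ) : LIndLE L X γ' := by
  rw [lindLE_iff] at hX ⊢
  intro F hF f
  obtain ⟨U, hU, hFU, hg, hbranch⟩ := hX F hF f
  refine ⟨U, hU, hFU, hg, ?_⟩
  rcases hbranch with h0 | ⟨β, hβ⟩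
  · exact Or.inl h0
  · exact Or.inr ⟨⟨β.1, lt_of_lt_of_le β.2 h⟩, hβ⟩

theorem Dim.ofOrdinal_le_iff {a b : Ordinal.{0}} :
    Dim.ofOrdinal a ≤ Dim.ofOrdinal b ↔ a ≤ b := by
  unfold Dim.ofOrdinal; exact_mod_cast Iff.rfl

theorem Dim.ofOrdinal_add_one (a : Ordinal.{0}) :
    Dim.ofOrdinal a + 1 = Dim.ofOrdinal (a + 1) := by
  unfold Dim.ofOrdinal; push_cast; ring

theorem lind_le_of_lindLE {L : Type} [TopologicalSpace L] {X : Type} [TopologicalSpace X]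
    (hX : Nonempty X) {β : Ordinal.{0}} (h : LIndLE L X β) :
    LInd L X ≤ Dim.ofOrdinal β := by
  unfold LInd
  rw [if_neg (not_isEmpty_of_nonempty X), if_pos ⟨β, h⟩]
  exact Dim.ofOrdinal_le_iff.mpr (csInf_le' h)

/-- If every `LIndLE` bound implies `d ≤` that bound, then `d ≤ LInd`. -/
theorem le_lind_of_forall {L : Type} [TopologicalSpace L] {X : Type} [TopologicalSpace X]
    (hX : Nonempty X) {d : Dim}
    (H : ∀ γ : Ordinal.{0}, LIndLE L X γ → d ≤ Dim.ofOrdinal γ) : d ≤ LInd L X := by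
  unfold LInd
  rw [if_neg (not_isEmpty_of_nonempty X)]
  split_ifs with h
  · exact H _ (csInf_mem h)
  · exact le_top

theorem le_lindPlus {L : Type} [TopologicalSpace L] {X : Type} [TopologicalSpace X]
    {b : X} {d : Dim}
    (H : ∀ U : Set X, IsOpen U → b ∈ U → d ≤ LInd L (↥(closure U))) :
    d ≤ LIndPlus L b := by
  refine le_sInf ?_
  rintro e ⟨U, hU, hbU, hle⟩
  exact le_trans (H U hU hbU) hle

theorem lindPlus_le_closure {L : Type} [TopologicalSpace L] {X : Type} [TopologicalSpace X]
    {b : X} {m : Dim} (h : m ≤ LIndPlus L b) {U : Set X} (hU : IsOpen U) (hbU : b ∈ U) :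
    m ≤ LInd L (↥(closure U)) :=
  le_trans h (sInf_le ⟨U, hU, hbU, le_refl _⟩)

end Helpers


-- ===================== Z-SPACE TOPOLOGY =====================

section ZTop

variable {ι X Y : Type} [TopologicalSpace ι] [DiscreteTopology ι]
  [TopologicalSpace X] [TopologicalSpace Y]

theorem zrel_eqvGen {p q : OnePoint ι × X × Y}
    (h : Relation.EqvGen (ZRel ι X Y) p q) :
    p = q ∨ (p.1 = OnePoint.infty ∧ q.1 = OnePoint.infty ∧ p.2.1 = q.2.1) := by
  induction h with
  | rel a b hab => exact Or.inr hab
  | refl a => exact Or.inl rfl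
  | symm a b _ ih =>
      rcases ih with h1 | h1
      · exact Or.inl h1.symm
      · exact Or.inr ⟨h1.2.1, h1.1, h1.2.2.symm⟩
  | trans a b c _ _ ih1 ih2 =>
      rcases ih1 with rfl | h1
      · exact ih2
      · rcases ih2 with rfl | h2
        · exact Or.inr h1
        · exact Or.inr ⟨h1.1, h2.2.1, h1.2.2.trans h2.2.2⟩

theorem ZRel.eq_of_mk_eq {p q : OnePoint ι × X × Y}
    (h : Quot.mk (ZRel ι X Y) p = Quot.mk (ZRel ι X Y) q) :
    p = q ∨ (p.1 = OnePoint.infty ∧ q.1 = OnePoint.infty ∧ p.2.1 = q.2.1) :=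
  zrel_eqvGen (Quot.eqvGen_exact h)

/-- A set is saturated for the `ZRel` relation. -/
def ZSatSet (A : Set (OnePoint ι × X × Y)) : Prop :=
  ∀ p ∈ A, ∀ q : OnePoint ι × X × Y,
    p.1 = OnePoint.infty → q.1 = OnePoint.infty → q.2.1 = p.2.1 → q ∈ A

theorem zquot_preimage_image {A : Set (OnePoint ι × X × Y)} (hA : ZSatSet A) :
    Quot.mk (ZRel ι X Y) ⁻¹' (Quot.mk (ZRel ι X Y) '' A) = A := by
  ext p
  constructor
  · rintro ⟨a, haA, hmk⟩
    rcases ZRel.eq_of_mk_eq hmk with rfl | ⟨h1, h2, h3⟩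
    · exact haA
    · exact hA a haA p h1 h2 h3.symm
  · intro hp; exact ⟨p, hp, rfl⟩

theorem zquot_isOpen_image {A : Set (OnePoint ι × X × Y)} (hA : ZSatSet A)
    (hopen : IsOpen A) : IsOpen (Quot.mk (ZRel ι X Y) '' A) := by
  have : IsOpen (Quot.mk (ZRel ι X Y) ⁻¹' (Quot.mk (ZRel ι X Y) '' A)) := by
    rw [zquot_preimage_image hA]; exact hopen
  exact isOpen_coinduced.mpr this

theorem zquot_isClosed_image {A : Set (OnePoint ι × X × Y)} (hA : ZSatSet A)
    (hcl : IsClosed A) : IsClosed (Quot.mk (ZRel ι X Y) '' A) := by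
  rw [← isOpen_compl_iff]
  apply isOpen_coinduced.mpr
  rw [Set.preimage_compl, zquot_preimage_image hA]
  exact hcl.isOpen_compl

theorem zmemq (r : OnePoint ι × X × Y) (A : Set (OnePoint ι × X × Y)) (hA : ZSatSet A)
    (hr : Quot.mk (ZRel ι X Y) r ∈ Quot.mk (ZRel ι X Y) '' A) : r ∈ A := by
  rwa [← Set.mem_preimage, zquot_preimage_image hA] at hr

theorem zsat_cyl (W : Set (OnePoint ι)) (V : Set X)
    (hW : OnePoint.infty ∈ W) :
    ZSatSet (W ×ˢ (V ×ˢ (Set.univ : Set Y))) := by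
  rintro ⟨pa, px, py⟩ ⟨-, hV, -⟩ ⟨qa, qx, qy⟩ h1 h2 h3
  simp only at h1 h2 h3 ⊢
  subst h2
  exact ⟨hW, by simpa [h3] using hV, trivial⟩

theorem zsat_slice (i : ι) (O : Set (X × Y)) :
    ZSatSet (({((i : OnePoint ι))} : Set (OnePoint ι)) ×ˢ O) := by
  rintro ⟨pa, px, py⟩ ⟨hW, -⟩ q h1 h2 h3
  simp only [Set.mem_singleton_iff] at hW
  rw [hW] at h1
  exact absurd h1 (OnePoint.coe_ne_infty i)

theorem zsat_slice_compl (i : ι) :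
    ZSatSet ((({((i : OnePoint ι))} : Set (OnePoint ι))ᶜ) ×ˢ (Set.univ : Set (X × Y))) := by
  rintro r ⟨-, -⟩ s h1 h2 h3
  refine ⟨?_, trivial⟩
  rw [h2]
  exact fun hs => OnePoint.infty_ne_coe i (Set.mem_singleton_iff.mp hs)

theorem isOpen_onePoint_singleton (i : ι) :
    IsOpen ({((i : OnePoint ι))} : Set (OnePoint ι)) := by
  rw [OnePoint.isOpen_iff_of_notMem
    (fun h => OnePoint.infty_ne_coe i (Set.mem_singleton_iff.mp h))]
  exact isOpen_discrete _

theorem isOpen_onePoint_compl_singleton (i : ι) :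
    IsOpen (({((i : OnePoint ι))} : Set (OnePoint ι))ᶜ) := by
  rw [OnePoint.isOpen_iff_of_mem
    (show OnePoint.infty ∈ (({((i : OnePoint ι))} : Set (OnePoint ι))ᶜ) from
      fun h => OnePoint.infty_ne_coe i (Set.mem_singleton_iff.mp h))]
  have h1 : (OnePoint.some ⁻¹' (({((i : OnePoint ι))} : Set (OnePoint ι))ᶜ))ᶜ = {i} := by
    ext j; simp [OnePoint.coe_eq_coe]
  rw [h1]
  exact ⟨isClosed_discrete _, isCompact_singleton⟩

theorem zquot_t2 [T2Space X] [T2Space Y] : T2Space (ZQuot ι X Y) := by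
  constructor
  intro a b hab
  induction a using Quot.ind with | _ p =>
  induction b using Quot.ind with | _ q =>
  obtain ⟨pa, px, py⟩ := p
  obtain ⟨qa, qx, qy⟩ := q
  cases pa with
  | infty =>
    cases qa with
    | infty =>
      have hxx : px ≠ qx := by
        intro h
        exact hab (Quot.sound ⟨rfl, rfl, h⟩)
      obtain ⟨V, V', hV, hV', hpx, hqx, hdisj⟩ := t2_separation hxx
      refine ⟨Quot.mk _ '' ((Set.univ : Set (OnePoint ι)) ×ˢ (V ×ˢ (Set.univ : Set Y))),
        Quot.mk _ '' ((Set.univ : Set (OnePoint ι)) ×ˢ (V' ×ˢ (Set.univ : Set Y))), ?_, ?_, ?_, ?_, ?_⟩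
      · exact zquot_isOpen_image (zsat_cyl _ _ (Set.mem_univ _)) (isOpen_univ.prod (hV.prod isOpen_univ))
      · exact zquot_isOpen_image (zsat_cyl _ _ (Set.mem_univ _)) (isOpen_univ.prod (hV'.prod isOpen_univ))
      · exact ⟨(OnePoint.infty, px, py), ⟨trivial, hpx, trivial⟩, rfl⟩
      · exact ⟨(OnePoint.infty, qx, qy), ⟨trivial, hqx, trivial⟩, rfl⟩
      · rw [Set.disjoint_left]
        intro u hu1 hu2
        induction u using Quot.ind with | _ r =>
        have h1 := zmemq r _ (zsat_cyl _ _ (Set.mem_univ _)) hu1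
        have h2 := zmemq r _ (zsat_cyl _ _ (Set.mem_univ _)) hu2
        exact Set.disjoint_left.mp hdisj h1.2.1 h2.2.1
    | coe j =>
      refine ⟨Quot.mk _ '' ((({((j : OnePoint ι))} : Set (OnePoint ι))ᶜ) ×ˢ (Set.univ : Set (X × Y))),
        Quot.mk _ '' (({((j : OnePoint ι))} : Set (OnePoint ι)) ×ˢ (Set.univ : Set (X × Y))), ?_, ?_, ?_, ?_, ?_⟩
      · exact zquot_isOpen_image (zsat_slice_compl j) ((isOpen_onePoint_compl_singleton j).prod isOpen_univ)
      · exact zquot_isOpen_image (zsat_slice _ _) ((isOpen_onePoint_singleton j).prod isOpen_univ)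
      · exact ⟨(OnePoint.infty, px, py), ⟨fun h => OnePoint.infty_ne_coe j (Set.mem_singleton_iff.mp h), trivial⟩, rfl⟩
      · exact ⟨((j : OnePoint ι), qx, qy), ⟨rfl, trivial⟩, rfl⟩
      · rw [Set.disjoint_left]
        intro u hu1 hu2
        induction u using Quot.ind with | _ r =>
        have h1 := zmemq r _ (zsat_slice_compl j) hu1
        have h2 := zmemq r _ (zsat_slice _ _) hu2
        exact h1.1 h2.1
  | coe i =>
      cases qa with
      | infty =>
        refine ⟨Quot.mk _ '' (({((i : OnePoint ι))} : Set (OnePoint ι)) ×ˢ (Set.univ : Set (X × Y))),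
          Quot.mk _ '' ((({((i : OnePoint ι))} : Set (OnePoint ι))ᶜ) ×ˢ (Set.univ : Set (X × Y))), ?_, ?_, ?_, ?_, ?_⟩
        · exact zquot_isOpen_image (zsat_slice _ _) ((isOpen_onePoint_singleton i).prod isOpen_univ)
        · exact zquot_isOpen_image (zsat_slice_compl i) ((isOpen_onePoint_compl_singleton i).prod isOpen_univ)
        · exact ⟨((i : OnePoint ι), px, py), ⟨rfl, trivial⟩, rfl⟩
        · exact ⟨(OnePoint.infty, qx, qy), ⟨fun h => OnePoint.infty_ne_coe i (Set.mem_singleton_iff.mp h), trivial⟩, rfl⟩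
        · rw [Set.disjoint_left]
          intro u hu1 hu2
          induction u using Quot.ind with | _ r =>
          have h1 := zmemq r _ (zsat_slice _ _) hu1
          have h2 := zmemq r _ (zsat_slice_compl i) hu2
          exact h2.1 h1.1
      | coe j =>
        by_cases hij : i = j
        · subst hij
          have hpq : (px, py) ≠ (qx, qy) := by
            intro h
            apply hab
            have : ((i : OnePoint ι), px, py) = ((i : OnePoint ι), qx, qy) := by
              rw [Prod.ext_iff] at h ⊢
              exact ⟨rfl, Prod.ext_iff.mpr h⟩
            rw [this]
          obtain ⟨O, O', hO, hO', hpO, hqO, hdisj⟩ := t2_separation hpq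
          refine ⟨Quot.mk _ '' (({((i : OnePoint ι))} : Set (OnePoint ι)) ×ˢ O),
            Quot.mk _ '' (({((i : OnePoint ι))} : Set (OnePoint ι)) ×ˢ O'), ?_, ?_, ?_, ?_, ?_⟩
          · exact zquot_isOpen_image (zsat_slice _ _) ((isOpen_onePoint_singleton i).prod hO)
          · exact zquot_isOpen_image (zsat_slice _ _) ((isOpen_onePoint_singleton i).prod hO')
          · exact ⟨((i : OnePoint ι), px, py), ⟨rfl, hpO⟩, rfl⟩
          · exact ⟨((i : OnePoint ι), qx, qy), ⟨rfl, hqO⟩, rfl⟩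
          · rw [Set.disjoint_left]
            intro u hu1 hu2
            induction u using Quot.ind with | _ r =>
            have h1 := zmemq r _ (zsat_slice _ _) hu1
            have h2 := zmemq r _ (zsat_slice _ _) hu2
            exact Set.disjoint_left.mp hdisj h1.2 h2.2
        · refine ⟨Quot.mk _ '' (({((i : OnePoint ι))} : Set (OnePoint ι)) ×ˢ (Set.univ : Set (X × Y))),
            Quot.mk _ '' (({((j : OnePoint ι))} : Set (OnePoint ι)) ×ˢ (Set.univ : Set (X × Y))), ?_, ?_, ?_, ?_, ?_⟩
          · exact zquot_isOpen_image (zsat_slice _ _) ((isOpen_onePoint_singleton i).prod isOpen_univ)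
          · exact zquot_isOpen_image (zsat_slice _ _) ((isOpen_onePoint_singleton j).prod isOpen_univ)
          · exact ⟨((i : OnePoint ι), px, py), ⟨rfl, trivial⟩, rfl⟩
          · exact ⟨((j : OnePoint ι), qx, qy), ⟨rfl, trivial⟩, rfl⟩
          · rw [Set.disjoint_left]
            intro u hu1 hu2
            induction u using Quot.ind with | _ r =>
            have h1 := zmemq r _ (zsat_slice _ _) hu1
            have h2 := zmemq r _ (zsat_slice _ _) hu2
            exact hij (OnePoint.coe_eq_coe.mp (h1.1.symm.trans h2.1))

end ZTop


-- ===================== MORE Z-SPACE FACTS =====================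

section ZTop2

variable {ι X Y : Type} [TopologicalSpace ι] [DiscreteTopology ι]
  [TopologicalSpace X] [TopologicalSpace Y]

theorem zquot_compactSpace [CompactSpace X] [CompactSpace Y] :
    CompactSpace (ZQuot ι X Y) :=
  Quot.compactSpace

theorem phi_mem_closed [T2Space X] {φ : ι → Set X} (h : ∀ i, φ i ∈ SFam X) (i : ι) :
    IsClosed (φ i) := by
  rcases h i with hfin | hne
  · exact hfin.isClosed
  · obtain ⟨e⟩ := hne
    have : CompactSpace ↥(φ i) := e.symm.compactSpace
    exact (isCompact_iff_compactSpace.mpr this).isClosed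

theorem zset_eq_image {φ : ι → Set X} :
    ZSet ι X Y φ = Quot.mk (ZRel ι X Y) ''
      {p : OnePoint ι × X × Y |
        p.1 = OnePoint.infty ∨ ∃ i : ι, p.1 = (i : OnePoint ι) ∧ p.2.1 ∈ φ i} := by
  ext ζ
  constructor
  · rintro ⟨p, hmk, hp⟩; exact ⟨p, hp, hmk⟩
  · rintro ⟨p, hp, hmk⟩; exact ⟨p, hmk, hp⟩

theorem zset_isClosed [T2Space X] [T2Space Y] [CompactSpace X] [CompactSpace Y]
    {φ : ι → Set X} (hφ : ∀ i, φ i ∈ SFam X) : IsClosed (ZSet ι X Y φ) := by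
  rw [zset_eq_image]
  apply zquot_isClosed_image
  · rintro p hp q h1 h2 h3
    exact Or.inl h2
  · rw [← isOpen_compl_iff]
    have : {p : OnePoint ι × X × Y |
        p.1 = OnePoint.infty ∨ ∃ i : ι, p.1 = (i : OnePoint ι) ∧ p.2.1 ∈ φ i}ᶜ =
        ⋃ i : ι, ({((i : OnePoint ι))} : Set (OnePoint ι)) ×ˢ (((φ i)ᶜ) ×ˢ (Set.univ : Set Y)) := by
      ext ⟨pa, px, py⟩
      simp only [Set.mem_compl_iff, Set.mem_setOf_eq, Set.mem_iUnion, Set.mem_prod,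
        Set.mem_singleton_iff, Set.mem_univ, and_true]
      constructor
      · intro h
        push_neg at h
        obtain ⟨h1, h2⟩ := h
        cases pa with
        | infty => exact absurd rfl h1
        | coe i => exact ⟨i, rfl, h2 i rfl⟩
      · rintro ⟨i, rfl, hx⟩
        push_neg
        refine ⟨OnePoint.coe_ne_infty i, ?_⟩
        intro j hj
        rw [OnePoint.coe_eq_coe] at hj
        rwa [← hj]
    rw [this]
    exact isOpen_iUnion fun i =>
      (isOpen_onePoint_singleton i).prod ((phi_mem_closed hφ i).isOpen_compl.prod isOpen_univ)

theorem zspace_t2 [T2Space X] [T2Space Y] {φ : ι → Set X} :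
    T2Space (ZSpace ι X Y φ) := by
  haveI := zquot_t2 (ι := ι) (X := X) (Y := Y)
  infer_instance

theorem zspace_compact [T2Space X] [T2Space Y] [CompactSpace X] [CompactSpace Y]
    {φ : ι → Set X} (hφ : ∀ i, φ i ∈ SFam X) : CompactSpace (ZSpace ι X Y φ) := by
  haveI := zquot_compactSpace (ι := ι) (X := X) (Y := Y)
  exact isCompact_iff_compactSpace.mp (zset_isClosed hφ).isCompact

/-- The canonical copy of `X` inside `Z(X,Y)`. -/
def zhat (ι : Type) [TopologicalSpace ι] (X Y : Type) [TopologicalSpace X] [TopologicalSpace Y]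
    (φ : ι → Set X) (y₀ : Y) (x : X) : ZSpace ι X Y φ :=
  ⟨Quot.mk (ZRel ι X Y) (OnePoint.infty, x, y₀),
    ⟨(OnePoint.infty, x, y₀), rfl, Or.inl rfl⟩⟩

theorem zhat_continuous {φ : ι → Set X} (y₀ : Y) :
    Continuous (zhat ι X Y φ y₀) := by
  apply Continuous.subtype_mk
  exact (continuous_quot_mk).comp (Continuous.prodMk continuous_const
    (Continuous.prodMk continuous_id continuous_const))

theorem zhat_injective {φ : ι → Set X} (y₀ : Y) :
    Function.Injective (zhat ι X Y φ y₀) := by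
  intro x x' h
  have h2 := congrArg Subtype.val h
  rcases ZRel.eq_of_mk_eq h2 with h3 | h3
  · exact (Prod.ext_iff.mp (Prod.ext_iff.mp h3).2).1
  · exact h3.2.2

theorem zhat_carrier (φ : ι → Set X) (y₀ : Y) (x : X) (y : Y) :
    Quot.mk (ZRel ι X Y) (OnePoint.infty, x, y) = (zhat ι X Y φ y₀ x).1 :=
  Quot.sound ⟨rfl, rfl, rfl⟩

theorem zhat_proj (φ : ι → Set X) (y₀ : Y) (x : X) :
    ZProjX φ (zhat ι X Y φ y₀ x) = x := rfl

theorem zQuotProjX_continuous : Continuous (ZQuotProjX : ZQuot ι X Y → X) := by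
  unfold ZQuotProjX
  exact continuous_quot_lift _ (continuous_fst.comp continuous_snd)

theorem zProjX_continuous {φ : ι → Set X} : Continuous (ZProjX φ : ZSpace ι X Y φ → X) :=
  (zQuotProjX_continuous).comp continuous_subtype_val

/-- The tube lemma for `ZQuot` at a point of the collapsed copy of `X`. -/
theorem ztube [CompactSpace Y] {G : Set (ZQuot ι X Y)} (hG : IsOpen G) {x₀ : X} {y₀ : Y}
    (hmem : Quot.mk (ZRel ι X Y) (OnePoint.infty, x₀, y₀) ∈ G) :
    ∃ (K : Set ι) (V : Set X), K.Finite ∧ IsOpen V ∧ x₀ ∈ V ∧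
      ∀ (a : OnePoint ι), (∀ i : ι, a = (i : OnePoint ι) → i ∉ K) →
        ∀ x ∈ V, ∀ y : Y, Quot.mk (ZRel ι X Y) (a, x, y) ∈ G := by
  have hG' : IsOpen (Quot.mk (ZRel ι X Y) ⁻¹' G) := hG.preimage continuous_quot_mk
  have hsub : ({OnePoint.infty} : Set (OnePoint ι)) ×ˢ (({x₀} : Set X) ×ˢ (Set.univ : Set Y)) ⊆
      Quot.mk (ZRel ι X Y) ⁻¹' G := by
    rintro ⟨pa, px, py⟩ ⟨h1, h2, -⟩
    simp only [Set.mem_singleton_iff] at h1 h2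
    rw [Set.mem_preimage, h1, h2]
    have : Quot.mk (ZRel ι X Y) (OnePoint.infty, x₀, py) =
        Quot.mk (ZRel ι X Y) (OnePoint.infty, x₀, y₀) := Quot.sound ⟨rfl, rfl, rfl⟩
    rw [this]
    exact hmem
  obtain ⟨u, v, hu, hv, hsu, hsv, huv⟩ :=
    generalized_tube_lemma isCompact_singleton
      (isCompact_singleton.prod isCompact_univ) hG' hsub
  obtain ⟨V, w, hV, hw, hxV, hok, hVw⟩ :=
    generalized_tube_lemma (s := ({x₀} : Set X)) (t := (Set.univ : Set Y))
      isCompact_singleton isCompact_univ hv hsv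
  have hinfty : OnePoint.infty ∈ u := hsu rfl
  obtain ⟨hclosed, hcompact⟩ := (OnePoint.isOpen_iff_of_mem hinfty).mp hu
  refine ⟨(OnePoint.some ⁻¹' u)ᶜ, V, hcompact.finite_of_discrete, hV,
    Set.singleton_subset_iff.mp hxV, ?_⟩
  intro a ha x hx y
  have hau : a ∈ u := by
    cases a with
    | infty => exact hinfty
    | coe i =>
        have := ha i rfl
        rw [Set.notMem_compl_iff] at this
        exact this
  have : (a, x, y) ∈ u ×ˢ v := ⟨hau, hVw ⟨hx, hok (Set.mem_univ y)⟩⟩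
  exact huv this

end ZTop2


-- ===================== SEQUENCE / CARDINALITY HELPERS =====================

section SeqHelpers

open Filter

/-- A point together with an injective sequence converging to it forms a copy of
`OnePoint ℕ`. -/
theorem seq_mem_sfam {X : Type} [TopologicalSpace X] [T2Space X] {x : ℕ → X} {b : X}
    (hinj : Function.Injective x) (hne : ∀ k, x k ≠ b)
    (htend : Filter.Tendsto x Filter.atTop (𝓝 b)) :
    insert b (Set.range x) ∈ SFam X := by
  right
  set S : Set X := insert b (Set.range x) with hS
  let e : OnePoint ℕ → ↥S := fun o =>
    Option.elim o ⟨b, Set.mem_insert _ _⟩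
      (fun n => ⟨x n, Set.mem_insert_of_mem _ (Set.mem_range_self n)⟩)
  have hbij : Function.Bijective e := by
    constructor
    · intro o o' h
      have h' := congrArg Subtype.val h
      match o, o' with
      | none, none => rfl
      | none, Option.some n => exact absurd h'.symm (hne n)
      | Option.some n, none => exact absurd h' (hne n)
      | Option.some n, Option.some m => exact congrArg _ (hinj h')
    · rintro ⟨s, hs⟩
      rcases hs with rfl | ⟨n, rfl⟩
      · exact ⟨none, rfl⟩
      · exact ⟨Option.some n, rfl⟩
  have hcont : Continuous e := by
    rw [continuous_iff_continuousAt]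
    intro o
    cases o with
    | coe n =>
        have hop : IsOpen ({((n : OnePoint ℕ))} : Set (OnePoint ℕ)) :=
          isOpen_onePoint_singleton n
        have hpure : 𝓝 ((n : OnePoint ℕ)) = pure ((n : OnePoint ℕ)) :=
          le_antisymm (le_pure_iff.mpr (hop.mem_nhds rfl)) (pure_le_nhds _)
        unfold ContinuousAt
        rw [hpure]
        exact tendsto_pure_left.mpr fun s hs => mem_of_mem_nhds hs
    | infty =>
        rw [OnePoint.continuousAt_infty']
        have h1 : Filter.coclosedCompact ℕ = Filter.atTop := by
          rw [Filter.coclosedCompact_eq_cocompact, cocompact_eq_atTop (α := ℕ)]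
        rw [h1]
        have : Filter.Tendsto (fun n : ℕ => (⟨x n, Set.mem_insert_of_mem _
            (Set.mem_range_self n)⟩ : ↥S)) Filter.atTop (𝓝 ⟨b, Set.mem_insert _ _⟩) := by
          rw [tendsto_subtype_rng]
          exact htend
        exact this
  have hcomp : CompactSpace (OnePoint ℕ) := inferInstance
  let E : OnePoint ℕ ≃ ↥S := Equiv.ofBijective e hbij
  exact ⟨(Continuous.homeoOfEquivCompactToT2 (f := E) hcont).symm⟩

/-- Fréchet–Urysohn is hereditary. -/
theorem frechetUrysohn_subtype {X : Type} [TopologicalSpace X] [FrechetUrysohnSpace X]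
    (S : Set X) : FrechetUrysohnSpace ↥S := by
  constructor
  intro s x hx
  have h1 : (x : X) ∈ closure ((↑) '' s : Set X) := by
    have h2 := image_closure_subset_closure_image
      (f := (Subtype.val : ↥S → X)) continuous_subtype_val (s := s)
    exact h2 (Set.mem_image_of_mem _ hx)
  obtain ⟨u, hu, hu2⟩ := mem_closure_iff_seq_limit.mp h1
  choose w hw1 hw2 using hu
  refine ⟨w, hw1, ?_⟩
  rw [tendsto_subtype_rng]
  have : (fun n => ((w n : ↥S) : X)) = u := funext hw2
  rw [this]
  exact hu2

/-- An infinite compact T1 space has infinite weight. -/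
theorem aleph0_le_tWeight {X : Type} [TopologicalSpace X] [T1Space X] [CompactSpace X]
    (hX : Infinite X) : ℵ₀ ≤ tWeight X := by
  by_contra hlt
  push_neg at hlt
  have hne : {c | ∃ B : Set (Set X), TopologicalSpace.IsTopologicalBasis B ∧ #B = c}.Nonempty :=
    ⟨_, ⟨_, TopologicalSpace.isTopologicalBasis_opens, rfl⟩⟩
  obtain ⟨Bas, hBas, hcard⟩ := csInf_mem hne
  unfold tWeight at hlt
  have hfin : Bas.Finite := by
    rw [← Cardinal.lt_aleph0_iff_set_finite, hcard]
    exact hlt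
  have hdisc : ∀ a : X, IsOpen ({a} : Set X) := by
    intro a
    have hsub : {b ∈ Bas | a ∈ b}.Finite := hfin.subset (Set.sep_subset _ _)
    have hopen : IsOpen (⋂₀ {b ∈ Bas | a ∈ b}) :=
      hsub.isOpen_sInter (fun b hb => hBas.isOpen hb.1)
    have heq : ({a} : Set X) = ⋂₀ {b ∈ Bas | a ∈ b} := by
      apply Set.eq_of_subset_of_subset
      · rintro y rfl
        exact fun b hb => hb.2
      · intro y hy
        by_contra hya
        rw [Set.mem_singleton_iff] at hya
        have hamem : a ∈ ({y}ᶜ : Set X) := by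
          rw [Set.mem_compl_singleton_iff]
          exact fun h => hya h.symm
        obtain ⟨bb, hbb, habb, hsubb⟩ :=
          hBas.exists_subset_of_mem_open hamem (isOpen_compl_singleton (x := y))
        have hybb : y ∈ bb := hy bb ⟨hbb, habb⟩
        exact (hsubb hybb) rfl
    rw [heq]
    exact hopen
  haveI : DiscreteTopology X := discreteTopology_iff_isOpen_singleton.mpr hdisc
  haveI : Finite X := finite_of_compact_of_discrete
  exact not_finite X

end SeqHelpers


section SeqHelpers2

open Filter

/-- If a value occurs frequently in a sequence converging to `b`, it equals `b`. -/
theorem eq_limit_of_frequently {X : Type} [TopologicalSpace X] [T1Space X]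
    {u : ℕ → X} {b t : X} (hu : Tendsto u atTop (𝓝 b))
    (hfreq : ∀ N : ℕ, ∃ j, N ≤ j ∧ u j = t) : t = b := by
  by_contra hne
  have hmem : ({t}ᶜ : Set X) ∈ 𝓝 b := (isOpen_compl_singleton).mem_nhds
    (by rw [Set.mem_compl_singleton_iff]; exact fun h => hne h.symm)
  have hev : ∀ᶠ j in atTop, u j ∈ ({t}ᶜ : Set X) := hu.eventually_mem hmem
  obtain ⟨N, hN⟩ := eventually_atTop.mp hev
  obtain ⟨j, hjN, hjt⟩ := hfreq N
  exact (hN j hjN) hjt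

theorem exists_large_index {X : Type} [TopologicalSpace X] [T1Space X]
    {u : ℕ → X} {b : X} (hu : Tendsto u atTop (𝓝 b)) (hne : ∀ k, u k ≠ b)
    (T : Finset X) (N : ℕ) : ∃ j, N ≤ j ∧ u j ∉ T := by
  by_contra h
  push_neg at h
  -- all values from N on lie in the finite set T
  have hcover : {j : ℕ | N ≤ j} ⊆ ⋃ t ∈ T, {j | N ≤ j ∧ u j = t} := by
    intro j hj
    simp only [Set.mem_iUnion]
    exact ⟨u j, h j hj, hj, rfl⟩
  have hInf : {j : ℕ | N ≤ j}.Infinite := by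
    have h0 : {j : ℕ | N ≤ j} = Set.Ici N := rfl
    rw [h0]
    exact Set.Ici_infinite N
  have : ∃ t ∈ T, {j | N ≤ j ∧ u j = t}.Infinite := by
    by_contra hfin
    push_neg at hfin
    exact hInf (Set.Finite.subset (Set.Finite.biUnion T.finite_toSet hfin) hcover)
  obtain ⟨t, htT, hinf⟩ := this
  have hfreq : ∀ M : ℕ, ∃ j, M ≤ j ∧ u j = t := by
    intro M
    obtain ⟨j, hj1, hj2⟩ := hinf.exists_gt M
    exact ⟨j, le_of_lt hj2, hj1.2⟩
  have := eq_limit_of_frequently hu hfreq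
  obtain ⟨j, -, hj⟩ := hfreq 0
  exact hne j (hj.trans this)

end SeqHelpers2


section SeqHelpers3

open Filter

theorem exists_injective_subseq {X : Type} [TopologicalSpace X] [T1Space X]
    {u : ℕ → X} {b : X} (hu : Tendsto u atTop (𝓝 b)) (hne : ∀ k, u k ≠ b) :
    ∃ ψ : ℕ → ℕ, StrictMono ψ ∧ Function.Injective (u ∘ ψ) := by
  have step : ∀ N : ℕ, ∃ j, N ≤ j ∧ u j ∉ (Finset.range N).image u :=
    fun N => exists_large_index hu hne _ N
  choose Jf hJ1 hJ2 using step
  let ψ : ℕ → ℕ := fun k => Nat.rec (Jf 0) (fun _ prev => Jf (prev + 1)) k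
  have hψs : ∀ k, ψ (k + 1) = Jf (ψ k + 1) := fun k => rfl
  have hmono : StrictMono ψ := strictMono_nat_of_lt_succ (fun k => by
    rw [hψs]; exact lt_of_lt_of_le (Nat.lt_succ_self _) (hJ1 (ψ k + 1)))
  have hnotmem : ∀ k, u (ψ (k + 1)) ∉ (Finset.range (ψ k + 1)).image u := fun k => by
    rw [hψs]; exact hJ2 (ψ k + 1)
  refine ⟨ψ, hmono, ?_⟩
  have key : ∀ m m', m < m' → u (ψ m) ≠ u (ψ m') := by
    intro m m' hmm'
    obtain ⟨k, rfl⟩ := Nat.exists_eq_add_of_lt hmm'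
    intro heq
    apply hnotmem (m + k)
    rw [← heq]
    apply Finset.mem_image_of_mem
    rw [Finset.mem_range]
    have : ψ m ≤ ψ (m + k) := hmono.monotone (Nat.le_add_right m k)
    omega
  intro m m' h
  rcases lt_trichotomy m m' with hl | he | hl
  · exact absurd h (key _ _ hl)
  · exact he
  · exact absurd h.symm (key _ _ hl)

theorem exists_index_avoid {ι : Type} {T : Set ι} (hT : ℵ₀ < #↥T)
    {bad : Set ι} (hbad : bad.Countable) : ∃ i, i ∈ T ∧ i ∉ bad := by
  by_contra h
  push_neg at h
  have hsub : T ⊆ bad := h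
  have hle : #↥T ≤ ℵ₀ :=
    le_trans (Cardinal.mk_le_mk_of_subset hsub)
      (Cardinal.mk_le_aleph0_iff.mpr (Set.countable_coe_iff.mpr hbad))
  exact absurd hT (not_lt.mpr hle)

theorem tendsto_interleave {X : Type} [TopologicalSpace X] {u v : ℕ → X} {b : X}
    (hu : Tendsto u atTop (𝓝 b)) (hv : Tendsto v atTop (𝓝 b)) :
    Tendsto (fun k => if Even k then u (k / 2) else v (k / 2)) atTop (𝓝 b) := by
  rw [tendsto_atTop']
  intro s hs
  obtain ⟨N1, hN1⟩ := eventually_atTop.mp (hu.eventually_mem hs)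
  obtain ⟨N2, hN2⟩ := eventually_atTop.mp (hv.eventually_mem hs)
  refine ⟨2 * (N1 + N2), fun k hk => ?_⟩
  have hdiv : N1 + N2 ≤ k / 2 := by
    rw [Nat.le_div_iff_mul_le (by norm_num)]
    omega
  by_cases hev : Even k
  · rw [if_pos hev]; exact hN1 _ (by omega)
  · rw [if_neg hev]; exact hN2 _ (by omega)

end SeqHelpers3


/-- A fibre `{i} × {x} × Y` inside `Z(X,Y)`. -/
def zfib (ι X Y : Type) [TopologicalSpace ι] [TopologicalSpace X] [TopologicalSpace Y]
    (φ : ι → Set X) (i : ι) (x : X) (hx : x ∈ φ i) (y : Y) : ZSpace ι X Y φ :=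
  ⟨Quot.mk (ZRel ι X Y) ((i : OnePoint ι), x, y), ⟨_, rfl, Or.inr ⟨i, rfl, hx⟩⟩⟩

theorem zfib_continuous {ι X Y : Type} [TopologicalSpace ι] [TopologicalSpace X]
    [TopologicalSpace Y] (φ : ι → Set X) (i : ι) (x : X) (hx : x ∈ φ i) :
    Continuous (zfib ι X Y φ i x hx) := by
  apply Continuous.subtype_mk
  exact continuous_quot_mk.comp (Continuous.prodMk continuous_const
    (Continuous.prodMk continuous_const continuous_id))

theorem zfib_injective {ι X Y : Type} [TopologicalSpace ι] [DiscreteTopology ι]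
    [TopologicalSpace X] [TopologicalSpace Y] (φ : ι → Set X) (i : ι) (x : X) (hx : x ∈ φ i) :
    Function.Injective (zfib ι X Y φ i x hx) := by
  intro y y' h
  have h2 := congrArg Subtype.val h
  rcases ZRel.eq_of_mk_eq h2 with h3 | h3
  · exact (Prod.ext_iff.mp (Prod.ext_iff.mp h3).2).2
  · exact absurd h3.1 (OnePoint.coe_ne_infty i)

-- STATEMENT 11
theorem statement11 (L : Type) [MetricSpace L] [CompactSpace L]
    (hANR : IsANR L) (hL : ¬ContractibleSpace L)
    (X Y : Type) [TopologicalSpace X] [TopologicalSpace Y]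
    [CompactSpace X] [CompactSpace Y] [T2Space X] [T2Space Y] [Nonempty X] [Nonempty Y]
    [FrechetUrysohnSpace X]
    (ι : Type) [TopologicalSpace ι] [DiscreteTopology ι]
    (hι : ZCardOK X Y ι) (φ : ι → Set X) (hφ : ZPhiOK φ)
    (B : Set X) (hB : IsClosed B)
    (z : ZSpace ι X Y φ) (hz : z ∈ ZHmu ι X Y φ)
    (hc : ZProjX φ z ∈ B)
    (hc1 : Dim.ofOrdinal 1 ≤ LIndPlus L (⟨ZProjX φ z, hc⟩ : ↥B))
    (α : Ordinal.{0}) (hα : ∀ b ∈ B, Dim.ofOrdinal α ≤ LIndPlus L b) :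
    min (Dim.ofOrdinal α) (LInd L Y) + 1 ≤ LIndPlus L z := by
  classical
  haveI hT2Z : T2Space (ZSpace ι X Y φ) := zspace_t2
  haveI hCZ : CompactSpace (ZSpace ι X Y φ) := zspace_compact hφ.1
  apply le_lindPlus
  intro U hUopen hzU
  have hCne : Nonempty ↥(closure U) := ⟨⟨z, subset_closure hzU⟩⟩
  apply le_lind_of_forall hCne
  intro γ hγ
  by_cases hLE : IsEmpty L
  · exact absurd hγ (not_lindLE_of_isEmpty L hLE γ _ _ hCne)
  haveI hLne : Nonempty L := not_isEmpty_iff.mp hLE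
  -- the Dim arithmetic finisher
  have hfin : ∀ (d : Dim) (β' : Ordinal.{0}), d ≤ Dim.ofOrdinal β' → β' < γ →
      d + 1 ≤ Dim.ofOrdinal γ := by
    intro d β' h1 h2
    calc d + 1 ≤ Dim.ofOrdinal β' + 1 := add_le_add_left h1 1
    _ = Dim.ofOrdinal (β' + 1) := Dim.ofOrdinal_add_one β'
    _ ≤ Dim.ofOrdinal γ := Dim.ofOrdinal_le_iff.mpr (Order.add_one_le_iff.mpr h2)
  -- basic setup
  set y₀ : Y := Classical.arbitrary Y with hy₀def
  set c : X := ZProjX φ z with hcdef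
  obtain ⟨cx, cy, hz_eq⟩ := hz
  have hcx : c = cx := by
    rw [hcdef]
    show ZQuotProjX (z : ZQuot ι X Y) = cx
    rw [hz_eq]
    rfl
  have hz_zhat : z = zhat ι X Y φ y₀ c := by
    apply Subtype.ext
    rw [hz_eq, hcx]
    exact Quot.sound ⟨rfl, rfl, rfl⟩
  set C : Set (ZSpace ι X Y φ) := closure U with hCdef
  -- lift U to an open set of the quotient
  obtain ⟨OU, hOU, hOUeq⟩ := isOpen_induced_iff.mp hUopen
  have hzOU : Quot.mk (ZRel ι X Y) (OnePoint.infty, c, y₀) ∈ OU := by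
    have h1 : zhat ι X Y φ y₀ c ∈ U := hz_zhat ▸ hzU
    rw [← hOUeq] at h1
    exact h1
  obtain ⟨K_U, V, hKUfin, hVopen, hcV, tubeU⟩ := ztube hOU hzOU
  have hzhatU : ∀ x ∈ V, zhat ι X Y φ y₀ x ∈ U := by
    intro x hx
    rw [← hOUeq]
    exact tubeU OnePoint.infty (fun i h => absurd h (OnePoint.infty_ne_coe i)) x hx y₀
  have hzhatC : ∀ x ∈ V, zhat ι X Y φ y₀ x ∈ C := fun x hx => subset_closure (hzhatU x hx)
  have hfibU : ∀ (i : ι), i ∉ K_U → ∀ x, ∀ (hxV : x ∈ V) (hxφ : x ∈ φ i), ∀ y : Y,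
      zfib ι X Y φ i x hxφ y ∈ U := by
    intro i hi x hxV hxφ y
    rw [← hOUeq]
    exact tubeU (i : OnePoint ι)
      (fun j hj => by rwa [← OnePoint.coe_eq_coe.mp hj]) x hxV y
  -- the small neighbourhood V₀ of c
  obtain ⟨V₀, hV₀open, hcV₀, hclV₀⟩ :=
    normal_exists_closure_subset (isClosed_singleton (x := c)) hVopen
      (Set.singleton_subset_iff.mpr hcV)
  have hcV₀' : c ∈ V₀ := hcV₀ rfl
  set E_X : Set X := closure (V₀ ∩ B) with hEXdef
  have hEXclosed : IsClosed E_X := isClosed_closure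
  have hE_B : E_X ⊆ B := closure_minimal Set.inter_subset_right hB
  have hE_V : E_X ⊆ V :=
    (closure_mono Set.inter_subset_left).trans hclV₀
  have hcE : c ∈ E_X := subset_closure ⟨hcV₀', hc⟩
  haveI hEXcomp : CompactSpace ↥E_X := isCompact_iff_compactSpace.mp hEXclosed.isCompact
  -- no full extension on E_X, from hc1
  have hc1' : ¬ LIndLE L (↥E_X) 0 := by
    intro hLE0
    set VB : Set ↥B := (Subtype.val) ⁻¹' V₀ with hVBdef
    have hVBopen : IsOpen VB := hV₀open.preimage continuous_subtype_val
    have hmemVB : (⟨ZProjX φ z, hc⟩ : ↥B) ∈ VB := hcV₀'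
    have h1 : Dim.ofOrdinal 1 ≤ LInd L ↥(closure VB) := lindPlus_le_closure hc1 hVBopen hmemVB
    have hsub : ∀ u : ↥(closure VB), ((u : ↥B) : X) ∈ E_X := by
      intro u
      have h2 : ((u : ↥B) : X) ∈ Subtype.val '' (closure VB) := Set.mem_image_of_mem _ u.2
      have h3 : Subtype.val '' (closure VB) ⊆ closure (Subtype.val '' VB) :=
        image_closure_subset_closure_image continuous_subtype_val
      have h4 : Subtype.val '' VB = V₀ ∩ B := by
        rw [hVBdef, Subtype.image_preimage_coe, Set.inter_comm]
      rw [h4] at h3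
      exact h3 h2
    let e : ↥(closure VB) → ↥E_X := fun u => ⟨((u : ↥B) : X), hsub u⟩
    have hecont : Continuous e :=
      (continuous_subtype_val.comp continuous_subtype_val).subtype_mk _
    have heinj : Function.Injective e := by
      intro a b h
      have h' := congrArg (Subtype.val : ↥E_X → X) h
      exact Subtype.ext (Subtype.ext h')
    haveI : CompactSpace ↥B := isCompact_iff_compactSpace.mp hB.isCompact
    haveI : CompactSpace ↥(closure VB) :=
      isCompact_iff_compactSpace.mp (isClosed_closure (s := VB)).isCompact
    have hce : IsClosedEmbedding e := hecont.isClosedEmbedding heinj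
    have h5 := lindLE_of_closedEmbedding L 0 _ _ _ _ e hce hLE0
    have hneVB : Nonempty ↥(closure VB) := ⟨⟨⟨c, hc⟩, subset_closure hmemVB⟩⟩
    have h6 := lind_le_of_lindLE hneVB h5
    have h7 := le_trans h1 h6
    rw [Dim.ofOrdinal_le_iff] at h7
    exact Ordinal.one_le_iff_ne_zero.mp h7 rfl
  rw [lindLE_iff] at hc1'
  push_neg at hc1'
  obtain ⟨F_w, hFw_closed, f_w, hf_w⟩ := hc1'
  -- no-full-extension helper
  have hNoExt : ∀ h : C(↥E_X, L),
      (∀ (u : ↥E_X) (hu : u ∈ F_w), h u = f_w ⟨u, hu⟩) → False := by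
    intro h hh
    have h0 := hf_w Set.univ isOpen_univ (Set.subset_univ _)
      ⟨⟨fun v => h v.1, h.continuous.comp continuous_subtype_val⟩,
        fun u hu => hh u hu⟩
    rcases h0 with ⟨⟨w, hw⟩, -⟩
    exact hw (Set.mem_univ w)
  -- transport the witness into the space C
  set F_wX : Set X := Subtype.val '' F_w with hFwXdef
  have hFwXcomp : IsCompact F_wX := (hFw_closed.isCompact).image continuous_subtype_val
  have hFwXclosed : IsClosed F_wX := hFwXcomp.isClosed
  have hFwX_sub : F_wX ⊆ E_X := by
    rintro x ⟨u, hu, rfl⟩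
    exact u.2
  have hlift : ∀ x (hx : x ∈ F_wX), (⟨x, hFwX_sub hx⟩ : ↥E_X) ∈ F_w := by
    rintro x ⟨u, hu, rfl⟩
    have : (⟨(u : X), hFwX_sub ⟨u, hu, rfl⟩⟩ : ↥E_X) = u := Subtype.ext rfl
    rwa [this]
  set Fhat : Set ↥C :=
    (Subtype.val : ↥C → ZSpace ι X Y φ) ⁻¹' (zhat ι X Y φ y₀ '' F_wX) with hFhatdef
  have hFhatclosed : IsClosed Fhat := by
    apply IsClosed.preimage continuous_subtype_val
    exact (hFwXcomp.image (zhat_continuous y₀)).isClosed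
  have hprF : ∀ w : ↥Fhat, ZProjX φ ((w : ↥C) : ZSpace ι X Y φ) ∈ F_wX := by
    rintro ⟨w, hw⟩
    obtain ⟨x, hxF, heq⟩ := hw
    show ZProjX φ (w : ZSpace ι X Y φ) ∈ F_wX
    rw [← heq, zhat_proj]
    exact hxF
  set pr : ↥Fhat → ↥F_w :=
    fun w => ⟨⟨_, hFwX_sub (hprF w)⟩, hlift _ (hprF w)⟩ with hprdef
  have hprcont : Continuous pr := by
    apply Continuous.subtype_mk; apply Continuous.subtype_mk
    exact zProjX_continuous.comp (continuous_subtype_val.comp continuous_subtype_val)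
  rw [lindLE_iff] at hγ
  obtain ⟨U₁, hU₁open, hFU₁, ⟨g, hg⟩, hbranch⟩ :=
    hγ Fhat hFhatclosed ⟨fun w => f_w (pr w), f_w.continuous.comp hprcont⟩
  obtain ⟨G₁, hG₁open, hG₁eq⟩ := isOpen_induced_iff.mp hU₁open
  -- membership of Fhat points and projections
  have hzhatFhat : ∀ x (hx : x ∈ F_wX), zhat ι X Y φ y₀ x ∈ C :=
    fun x hx => hzhatC x (hE_V (hFwX_sub hx))
  have hmemFhat : ∀ x (hx : x ∈ F_wX), (⟨zhat ι X Y φ y₀ x, hzhatFhat x hx⟩ : ↥C) ∈ Fhat :=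
    fun x hx => ⟨x, hx, rfl⟩
  -- the open set V₁ below U₁
  set V₁ : Set X := V ∩ (zhat ι X Y φ y₀) ⁻¹' G₁ with hV₁def
  have hV₁open : IsOpen V₁ := hVopen.inter (hG₁open.preimage (zhat_continuous y₀))
  have hmemU₁ : ∀ x (hx : x ∈ V₁), (⟨zhat ι X Y φ y₀ x, hzhatC x hx.1⟩ : ↥C) ∈ U₁ := by
    intro x hx
    rw [← hG₁eq]
    exact hx.2
  have hmemU₁' : ∀ x (hxV : x ∈ V) (hC' : zhat ι X Y φ y₀ x ∈ C),
      (⟨zhat ι X Y φ y₀ x, hC'⟩ : ↥C) ∈ U₁ → x ∈ V₁ := by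
    intro x hxV hC' hU
    rw [← hG₁eq] at hU
    exact ⟨hxV, hU⟩
  -- the function gg on V₁ and its pointwise version gv
  let gg : ↥V₁ → L := fun v =>
    g ⟨⟨zhat ι X Y φ y₀ (v : X), hzhatC _ v.2.1⟩, hmemU₁ _ v.2⟩
  have hggcont : Continuous gg := by
    apply g.continuous.comp
    apply Continuous.subtype_mk; apply Continuous.subtype_mk
    exact (zhat_continuous y₀).comp continuous_subtype_val
  set gv : X → L := fun x => if hx : x ∈ V₁ then gg ⟨x, hx⟩ else Classical.arbitrary L
    with hgvdef
  have hgv : ∀ (x : X) (hx : x ∈ V₁), gv x = gg ⟨x, hx⟩ := by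
    intro x hx
    rw [hgvdef]
    exact dif_pos hx
  have hgv_tendsto : ∀ (x : X), x ∈ V₁ → ∀ u : ℕ → X, (∀ k, u k ∈ V₁) →
      Filter.Tendsto u Filter.atTop (𝓝 x) →
      Filter.Tendsto (fun k => gv (u k)) Filter.atTop (𝓝 (gv x)) := by
    intro x hx u hu hten
    have h1 : Filter.Tendsto (fun k => (⟨u k, hu k⟩ : ↥V₁)) Filter.atTop (𝓝 ⟨x, hx⟩) := by
      rw [tendsto_subtype_rng]
      exact hten
    have h2 := (hggcont.tendsto ⟨x, hx⟩).comp h1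
    have h3 : (fun k => gv (u k)) = fun k => gg ⟨u k, hu k⟩ := funext fun k => hgv _ (hu k)
    rw [h3, hgv x hx]
    exact h2
  -- the value of g on Fhat points
  have hgF : ∀ (u : ↥E_X) (hu : u ∈ F_w) (hmem : ((u : X) ∈ V₁)),
      gv (u : X) = f_w ⟨u, hu⟩ := by
    intro u hu hmem
    have hxF : (u : X) ∈ F_wX := ⟨u, hu, rfl⟩
    have h1 := hg ⟨zhat ι X Y φ y₀ (u : X), hzhatFhat _ hxF⟩ (hmemFhat _ hxF)
    have h2 : pr ⟨⟨zhat ι X Y φ y₀ (u : X), hzhatFhat _ hxF⟩, hmemFhat _ hxF⟩ = ⟨u, hu⟩ := by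
      apply Subtype.ext; apply Subtype.ext
      show ZProjX φ (zhat ι X Y φ y₀ (u : X)) = (u : X)
      exact zhat_proj φ y₀ _
    rw [hgv _ hmem]
    show g _ = _
    calc g ⟨⟨zhat ι X Y φ y₀ (u : X), hzhatC _ hmem.1⟩, hmemU₁ _ hmem⟩
        = f_w (pr ⟨⟨zhat ι X Y φ y₀ (u : X), hzhatFhat _ hxF⟩, hmemFhat _ hxF⟩) := h1
    _ = f_w ⟨u, hu⟩ := by rw [h2]
  -- branch on the partition
  rcases hbranch with hempty | ⟨β, hβP⟩
  · -- U₁ is everything: full extension, contradiction with hNoExt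
    exfalso
    have hEV₁ : ∀ u : ↥E_X, (u : X) ∈ V₁ := by
      intro u
      apply hmemU₁' _ (hE_V u.2) (hzhatC _ (hE_V u.2))
      by_contra hni
      have : (⟨zhat ι X Y φ y₀ (u : X), hzhatC _ (hE_V u.2)⟩ : ↥C) ∈ U₁ᶜ := hni
      rw [hempty] at this
      exact this
    refine hNoExt ⟨fun u => gg ⟨(u : X), hEV₁ u⟩, ?_⟩ ?_
    · exact hggcont.comp ((continuous_subtype_val).subtype_mk _)
    · intro u hu
      have := hgF u hu (hEV₁ u)
      rwa [hgv _ (hEV₁ u)] at this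
  -- the partition P = U₁ᶜ with LIndLE bound β
  by_cases hA : ∃ b, b ∈ E_X ∧ b ∉ closure V₁
  · -- Case A : the partition contains the closure of an X-neighbourhood of b ∈ B
    obtain ⟨b, hbE, hbncl⟩ := hA
    set N_b : Set X := V \ closure V₁ with hNbdef
    have hNbopen : IsOpen N_b := hVopen.sdiff isClosed_closure
    have hbNb : b ∈ N_b := ⟨hE_V hbE, hbncl⟩
    set D : Set X := closure N_b with hDdef
    have hDlind : Dim.ofOrdinal α ≤ LInd L ↥D :=
      lindPlus_le_closure (hα b (hE_B hbE)) hNbopen hbNb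
    have hDC : ∀ d : ↥D, zhat ι X Y φ y₀ (d : X) ∈ C := by
      intro d
      have h1 : zhat ι X Y φ y₀ '' D ⊆ closure (zhat ι X Y φ y₀ '' N_b) :=
        image_closure_subset_closure_image (zhat_continuous y₀)
      have h2 : zhat ι X Y φ y₀ '' N_b ⊆ U := by
        rintro w ⟨x, hx, rfl⟩
        exact hzhatU x hx.1
      have h3 := (closure_mono h2) (h1 (Set.mem_image_of_mem _ d.2))
      exact h3
    have hDP : ∀ d : ↥D, (⟨zhat ι X Y φ y₀ (d : X), hDC d⟩ : ↥C) ∈ U₁ᶜ := by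
      intro d
      intro hmem
      rw [← hG₁eq] at hmem
      have h1 : (d : X) ∈ closure N_b := d.2
      have h2 : ((zhat ι X Y φ y₀) ⁻¹' G₁ ∩ N_b).Nonempty := by
        rw [mem_closure_iff] at h1
        exact h1 _ (hG₁open.preimage (zhat_continuous y₀)) hmem
      obtain ⟨d', hd'G, hd'N⟩ := h2
      exact hd'N.2 (subset_closure ⟨hd'N.1, hd'G⟩)
    haveI : CompactSpace ↥D := isCompact_iff_compactSpace.mp isClosed_closure.isCompact
    let e : ↥D → ↥(U₁ᶜ) := fun d => ⟨⟨zhat ι X Y φ y₀ (d : X), hDC d⟩, hDP d⟩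
    have hecont : Continuous e := by
      apply Continuous.subtype_mk; apply Continuous.subtype_mk
      exact (zhat_continuous y₀).comp continuous_subtype_val
    have heinj : Function.Injective e := by
      intro a a' h
      apply Subtype.ext
      exact zhat_injective y₀ (congrArg Subtype.val (congrArg Subtype.val h))
    have hce : IsClosedEmbedding e := hecont.isClosedEmbedding heinj
    have h5 := lindLE_of_closedEmbedding L β.1 _ _ _ _ e hce hβP
    have hneD : Nonempty ↥D := ⟨⟨b, subset_closure hbNb⟩⟩
    have h6 := le_trans hDlind (lind_le_of_lindLE hneD h5)
    rw [Dim.ofOrdinal_le_iff] at h6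
    exact hfin _ β.1 (le_trans (min_le_left _ _) (Dim.ofOrdinal_le_iff.mpr h6)) β.2
  · -- Case B : every point of E_X is in the closure of V₁
    push_neg at hA
    by_cases hB1 : ∃ (b' : X) (a₀ a₁ : L) (u v : ℕ → X), b' ∉ V₁ ∧ a₀ ≠ a₁ ∧
        (∀ k, u k ∈ V₁) ∧ (∀ k, v k ∈ V₁) ∧
        Filter.Tendsto u Filter.atTop (𝓝 b') ∧ Filter.Tendsto v Filter.atTop (𝓝 b') ∧
        Filter.Tendsto (fun k => gv (u k)) Filter.atTop (𝓝 a₀) ∧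
        Filter.Tendsto (fun k => gv (v k)) Filter.atTop (𝓝 a₁)
    · -- Case B1 : a whole fibre lies in the partition
      obtain ⟨b', a₀, a₁, useq, vseq, hb'nV₁, hne01, huV₁, hvV₁, huten, hvten, huval, hvval⟩ :=
        hB1
      set r : ℝ := dist a₀ a₁ / 5 with hrdef
      have hdist01 : dist a₀ a₁ = 5 * r := by rw [hrdef]; ring
      have hr : 0 < r := by
        have h0 := dist_pos.mpr hne01
        rw [hrdef]; linarith
      -- tails with close values
      obtain ⟨N₁, hN₁⟩ := Filter.eventually_atTop.mp
        (huval.eventually_mem (Metric.ball_mem_nhds a₀ hr))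
      obtain ⟨N₂, hN₂⟩ := Filter.eventually_atTop.mp
        (hvval.eventually_mem (Metric.ball_mem_nhds a₁ hr))
      set u1 : ℕ → X := fun k => useq (k + N₁) with hu1def
      set v1 : ℕ → X := fun k => vseq (k + N₂) with hv1def
      have hu1ten : Filter.Tendsto u1 Filter.atTop (𝓝 b') :=
        huten.comp (Filter.tendsto_add_atTop_nat N₁)
      have hv1ten : Filter.Tendsto v1 Filter.atTop (𝓝 b') :=
        hvten.comp (Filter.tendsto_add_atTop_nat N₂)
      have hu1V₁ : ∀ k, u1 k ∈ V₁ := fun k => huV₁ (k + N₁)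
      have hv1V₁ : ∀ k, v1 k ∈ V₁ := fun k => hvV₁ (k + N₂)
      have hu1val : ∀ k, dist (gv (u1 k)) a₀ < r := fun k => hN₁ (k + N₁) (by omega)
      have hv1val : ∀ k, dist (gv (v1 k)) a₁ < r := fun k => hN₂ (k + N₂) (by omega)
      have hu1ne : ∀ k, u1 k ≠ b' := fun k h => hb'nV₁ (h ▸ hu1V₁ k)
      have hv1ne : ∀ k, v1 k ≠ b' := fun k h => hb'nV₁ (h ▸ hv1V₁ k)
      -- injective subsequences
      obtain ⟨ψu, hψu, hu2inj⟩ := exists_injective_subseq hu1ten hu1ne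
      obtain ⟨ψv, hψv, hv2inj⟩ := exists_injective_subseq hv1ten hv1ne
      set u2 : ℕ → X := u1 ∘ ψu with hu2def
      set v2 : ℕ → X := v1 ∘ ψv with hv2def
      have hu2ten : Filter.Tendsto u2 Filter.atTop (𝓝 b') := hu1ten.comp hψu.tendsto_atTop
      have hv2ten : Filter.Tendsto v2 Filter.atTop (𝓝 b') := hv1ten.comp hψv.tendsto_atTop
      have hu2V₁ : ∀ k, u2 k ∈ V₁ := fun k => hu1V₁ (ψu k)
      have hv2V₁ : ∀ k, v2 k ∈ V₁ := fun k => hv1V₁ (ψv k)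
      have hu2val : ∀ k, dist (gv (u2 k)) a₀ < r := fun k => hu1val (ψu k)
      have hv2val : ∀ k, dist (gv (v2 k)) a₁ < r := fun k => hv1val (ψv k)
      have hu2ne : ∀ k, u2 k ≠ b' := fun k => hu1ne (ψu k)
      have hv2ne : ∀ k, v2 k ≠ b' := fun k => hv1ne (ψv k)
      have hdisj : ∀ n m, u2 n ≠ v2 m := by
        intro n m h
        have h1 := hu2val n
        have h2 := hv2val m
        rw [h] at h1
        have h3 := dist_triangle a₀ (gv (v2 m)) a₁
        rw [dist_comm a₀ (gv (v2 m))] at h3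
        rw [hdist01] at h3
        linarith
      -- the interleaved sequence
      set w : ℕ → X := fun k => if Even k then u2 (k / 2) else v2 (k / 2) with hwdef
      have hwe : ∀ n, w (2 * n) = u2 n := by
        intro n
        rw [hwdef]
        simp only
        rw [if_pos (even_two_mul n)]
        congr 1
        omega
      have hwo : ∀ n, w (2 * n + 1) = v2 n := by
        intro n
        rw [hwdef]
        simp only
        rw [if_neg (by simp [Nat.even_add_one, parity_simps])]
        congr 1
        omega
      have hwV₁ : ∀ k, w k ∈ V₁ := by
        intro k
        rw [hwdef]
        simp only
        split_ifs
        · exact hu2V₁ _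
        · exact hv2V₁ _
      have hwne : ∀ k, w k ≠ b' := by
        intro k
        rw [hwdef]
        simp only
        split_ifs
        · exact hu2ne _
        · exact hv2ne _
      have hwten : Filter.Tendsto w Filter.atTop (𝓝 b') := tendsto_interleave hu2ten hv2ten
      have hwinj : Function.Injective w := by
        intro m m' h
        have hm2 : ∀ k, Even k → w k = u2 (k / 2) := by
          intro k hk; rw [hwdef]; simp only; rw [if_pos hk]
        have hm3 : ∀ k, ¬ Even k → w k = v2 (k / 2) := by
          intro k hk; rw [hwdef]; simp only; rw [if_neg hk]
        by_cases he1 : Even m <;> by_cases he2 : Even m'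
        · rw [hm2 m he1, hm2 m' he2] at h
          have := hu2inj h
          rw [Nat.even_iff] at he1 he2
          omega
        · rw [hm2 m he1, hm3 m' he2] at h
          exact absurd h (hdisj _ _)
        · rw [hm3 m he1, hm2 m' he2] at h
          exact absurd h.symm (hdisj _ _)
        · rw [hm3 m he1, hm3 m' he2] at h
          have := hv2inj h
          rw [Nat.even_iff] at he1 he2
          omega
      -- the sequence set in SFam
      have hS' : insert b' (Set.range w) ∈ SFam X := seq_mem_sfam hwinj hwne hwten
      haveI hXinf : Infinite X := Infinite.of_injective w hwinj
      -- choose the index i⋆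
      have hcard : ℵ₀ < #↥(φ ⁻¹' {insert b' (Set.range w)}) := by
        rw [hφ.2 _ hS']
        exact lt_of_le_of_lt (aleph0_le_tWeight hXinf) hι.2.1
      -- the controlled quotient-opens around the zhat (w k)
      have hOmega : ∀ k : ℕ, ∃ OQ : Set (ZQuot ι X Y), IsOpen OQ ∧
          Quot.mk (ZRel ι X Y) (OnePoint.infty, w k, y₀) ∈ OQ ∧
          ∀ ζ : ZSpace ι X Y φ, (ζ : ZQuot ι X Y) ∈ OQ →
            ∃ (hC' : ζ ∈ C) (hU' : (⟨ζ, hC'⟩ : ↥C) ∈ U₁),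
              g ⟨⟨ζ, hC'⟩, hU'⟩ ∈ Metric.ball (gv (w k)) r := by
        intro k
        have hWopen : IsOpen ((fun p : ↥U₁ => g p) ⁻¹' Metric.ball (gv (w k)) r) :=
          (Metric.isOpen_ball).preimage g.continuous
        obtain ⟨OC, hOCopen, hOCeq⟩ := isOpen_induced_iff.mp hWopen
        obtain ⟨OZ, hOZopen, hOZeq⟩ := isOpen_induced_iff.mp hOCopen
        obtain ⟨OQ', hOQ'open, hOQ'eq⟩ := isOpen_induced_iff.mp hOZopen
        obtain ⟨OG₁, hOG₁open, hOG₁eq⟩ := isOpen_induced_iff.mp hG₁open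
        refine ⟨OU ∩ (OG₁ ∩ OQ'), hOU.inter (hOG₁open.inter hOQ'open), ?_, ?_⟩
        · have hwk := hwV₁ k
          have hmU : zhat ι X Y φ y₀ (w k) ∈ U := hzhatU _ hwk.1
          have hmOU : ((zhat ι X Y φ y₀ (w k)) : ZQuot ι X Y) ∈ OU := by
            rw [← hOUeq] at hmU
            exact hmU
          have hmOG : ((zhat ι X Y φ y₀ (w k)) : ZQuot ι X Y) ∈ OG₁ := by
            have h1 : zhat ι X Y φ y₀ (w k) ∈ G₁ := hwk.2
            rw [← hOG₁eq] at h1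
            exact h1
          have hgval : g ⟨⟨zhat ι X Y φ y₀ (w k), hzhatC _ hwk.1⟩, hmemU₁ _ hwk⟩ ∈
              Metric.ball (gv (w k)) r := by
            have h2 : g ⟨⟨zhat ι X Y φ y₀ (w k), hzhatC _ hwk.1⟩, hmemU₁ _ hwk⟩ = gv (w k) :=
              (hgv _ hwk).symm
            rw [Metric.mem_ball, h2, dist_self]
            exact hr
          have hmW : (⟨⟨zhat ι X Y φ y₀ (w k), hzhatC _ hwk.1⟩, hmemU₁ _ hwk⟩ : ↥U₁) ∈
              (fun p : ↥U₁ => g p) ⁻¹' Metric.ball (gv (w k)) r := hgval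
          rw [← hOCeq] at hmW
          rw [← hOZeq] at hmW
          rw [← hOQ'eq] at hmW
          exact ⟨hmOU, hmOG, hmW⟩
        · rintro ζ ⟨hζU, hζG, hζQ⟩
          have hζU' : ζ ∈ U := by rw [← hOUeq]; exact hζU
          have hC' : ζ ∈ C := subset_closure hζU'
          have hG' : ζ ∈ G₁ := by rw [← hOG₁eq]; exact hζG
          have hU' : (⟨ζ, hC'⟩ : ↥C) ∈ U₁ := by rw [← hG₁eq]; exact hG'
          refine ⟨hC', hU', ?_⟩
          have h1 : (⟨⟨ζ, hC'⟩, hU'⟩ : ↥U₁) ∈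
              (fun p : ↥U₁ => g p) ⁻¹' Metric.ball (gv (w k)) r := by
            rw [← hOCeq, ← hOZeq, ← hOQ'eq]
            exact hζQ
          exact h1
      choose OQ hOQopen hOQmem hOQspec using hOmega
      have htube0 : ∀ k : ℕ, ∃ (K : Set ι) (V' : Set X), K.Finite ∧ IsOpen V' ∧ w k ∈ V' ∧
          ∀ (a : OnePoint ι), (∀ i : ι, a = (i : OnePoint ι) → i ∉ K) →
            ∀ x ∈ V', ∀ y : Y, Quot.mk (ZRel ι X Y) (a, x, y) ∈ OQ k :=
        fun k => ztube (hOQopen k) (hOQmem k)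
      choose Kt Vt hKtfin hVtopen hwVt htube using htube0
      set bad : Set ι := K_U ∪ ⋃ k, Kt k with hbaddef
      have hbadc : bad.Countable :=
        (hKUfin.countable).union (Set.countable_iUnion fun k => (hKtfin k).countable)
      obtain ⟨istar, histT, histbad⟩ := exists_index_avoid hcard hbadc
      have hφi : φ istar = insert b' (Set.range w) := by
        have := histT
        rwa [Set.mem_preimage, Set.mem_singleton_iff] at this
      have hb'φ : b' ∈ φ istar := by rw [hφi]; exact Set.mem_insert _ _
      have hwφ : ∀ k, w k ∈ φ istar := fun k => by
        rw [hφi]; exact Set.mem_insert_of_mem _ ⟨k, rfl⟩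
      have histKt : ∀ k, istar ∉ Kt k := fun k h =>
        histbad (Set.mem_union_right _ (Set.mem_iUnion.mpr ⟨k, h⟩))
      -- the fibre points
      have hfkOQ : ∀ k (y : Y),
          ((zfib ι X Y φ istar (w k) (hwφ k) y : ZSpace ι X Y φ) : ZQuot ι X Y) ∈ OQ k := by
        intro k y
        exact htube k (istar : OnePoint ι)
          (fun j hj => by rw [← OnePoint.coe_eq_coe.mp hj]; exact histKt k)
          (w k) (hwVt k) y
      have hfk3 : ∀ k (y : Y), ∃ (hC' : zfib ι X Y φ istar (w k) (hwφ k) y ∈ C)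
          (hU' : (⟨zfib ι X Y φ istar (w k) (hwφ k) y, hC'⟩ : ↥C) ∈ U₁),
          g ⟨⟨zfib ι X Y φ istar (w k) (hwφ k) y, hC'⟩, hU'⟩ ∈ Metric.ball (gv (w k)) r :=
        fun k y => hOQspec k _ (hfkOQ k y)
      choose hCk hUk hgk using hfk3
      -- the fibre over b' lies in C
      have hfibten : ∀ y : Y, Filter.Tendsto
          (fun k => zfib ι X Y φ istar (w k) (hwφ k) y) Filter.atTop
          (𝓝 (zfib ι X Y φ istar b' hb'φ y)) := by
        intro y
        rw [tendsto_subtype_rng]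
        have hcont2 : Continuous (fun x : X => Quot.mk (ZRel ι X Y) ((istar : OnePoint ι), x, y)) :=
          continuous_quot_mk.comp (Continuous.prodMk continuous_const
            (Continuous.prodMk continuous_id continuous_const))
        exact (hcont2.tendsto b').comp hwten
      have hξC : ∀ y : Y, zfib ι X Y φ istar b' hb'φ y ∈ C := by
        intro y
        have h1 : IsClosed C := isClosed_closure
        exact h1.mem_of_tendsto (hfibten y)
          (Filter.Eventually.of_forall (fun k => hCk k y))
      -- the fibre over b' lies in the partition
      have hξP : ∀ y : Y, (⟨zfib ι X Y φ istar b' hb'φ y, hξC y⟩ : ↥C) ∈ U₁ᶜ := by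
        intro y
        intro hin
        -- g at the fibre point is a two-sided limit: contradiction
        have hten1 : Filter.Tendsto (fun n =>
            (⟨⟨zfib ι X Y φ istar (w n) (hwφ n) y, hCk n y⟩, hUk n y⟩ : ↥U₁))
            Filter.atTop (𝓝 ⟨⟨zfib ι X Y φ istar b' hb'φ y, hξC y⟩, hin⟩) := by
          rw [tendsto_subtype_rng, tendsto_subtype_rng, tendsto_subtype_rng]
          have := hfibten y
          rw [tendsto_subtype_rng] at this
          exact this
        have hgten : Filter.Tendsto (fun n =>
            g ⟨⟨zfib ι X Y φ istar (w n) (hwφ n) y, hCk n y⟩, hUk n y⟩)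
            Filter.atTop (𝓝 (g ⟨⟨zfib ι X Y φ istar b' hb'φ y, hξC y⟩, hin⟩)) :=
          (g.continuous.tendsto _).comp hten1
        set gL : L := g ⟨⟨zfib ι X Y φ istar b' hb'φ y, hξC y⟩, hin⟩ with hgLdef
        -- even part : values near a₀
        have hge : ∀ n : ℕ, dist
            (g ⟨⟨zfib ι X Y φ istar (w (2 * n)) (hwφ (2 * n)) y, hCk (2 * n) y⟩,
              hUk (2 * n) y⟩) a₀ < 2 * r := by
          intro n
          have h1 := hgk (2 * n) y
          rw [Metric.mem_ball] at h1
          have h2 : dist (gv (w (2 * n))) a₀ < r := by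
            rw [hwe n]
            exact hu2val n
          calc dist _ a₀ ≤ dist _ (gv (w (2 * n))) + dist (gv (w (2 * n))) a₀ :=
                dist_triangle _ _ _
          _ < 2 * r := by linarith
        have hgo : ∀ n : ℕ, dist
            (g ⟨⟨zfib ι X Y φ istar (w (2 * n + 1)) (hwφ (2 * n + 1)) y, hCk (2 * n + 1) y⟩,
              hUk (2 * n + 1) y⟩) a₁ < 2 * r := by
          intro n
          have h1 := hgk (2 * n + 1) y
          rw [Metric.mem_ball] at h1
          have h2 : dist (gv (w (2 * n + 1))) a₁ < r := by
            rw [hwo n]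
            exact hv2val n
          calc dist _ a₁ ≤ dist _ (gv (w (2 * n + 1))) + dist (gv (w (2 * n + 1))) a₁ :=
                dist_triangle _ _ _
          _ < 2 * r := by linarith
        -- the even and odd subsequences of g-values also converge to gL
        have hgeten : Filter.Tendsto (fun n =>
            g ⟨⟨zfib ι X Y φ istar (w (2 * n)) (hwφ (2 * n)) y, hCk (2 * n) y⟩,
              hUk (2 * n) y⟩) Filter.atTop (𝓝 gL) := by
          have hmono : Filter.Tendsto (fun n : ℕ => 2 * n) Filter.atTop Filter.atTop :=
            StrictMono.tendsto_atTop (fun a b hab => by omega)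
          exact hgten.comp hmono
        have hgoten : Filter.Tendsto (fun n =>
            g ⟨⟨zfib ι X Y φ istar (w (2 * n + 1)) (hwφ (2 * n + 1)) y, hCk (2 * n + 1) y⟩,
              hUk (2 * n + 1) y⟩) Filter.atTop (𝓝 gL) := by
          have hmono : Filter.Tendsto (fun n : ℕ => 2 * n + 1) Filter.atTop Filter.atTop :=
            StrictMono.tendsto_atTop (fun a b hab => by omega)
          exact hgten.comp hmono
        have hd0 : dist gL a₀ ≤ 2 * r := by
          have hdten : Filter.Tendsto (fun n =>
              dist (g ⟨⟨zfib ι X Y φ istar (w (2 * n)) (hwφ (2 * n)) y, hCk (2 * n) y⟩,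
                hUk (2 * n) y⟩) a₀) Filter.atTop (𝓝 (dist gL a₀)) :=
            hgeten.dist tendsto_const_nhds
          exact le_of_tendsto' hdten (fun n => le_of_lt (hge n))
        have hd1 : dist gL a₁ ≤ 2 * r := by
          have hdten : Filter.Tendsto (fun n =>
              dist (g ⟨⟨zfib ι X Y φ istar (w (2 * n + 1)) (hwφ (2 * n + 1)) y,
                hCk (2 * n + 1) y⟩, hUk (2 * n + 1) y⟩) a₁)
              Filter.atTop (𝓝 (dist gL a₁)) :=
            hgoten.dist tendsto_const_nhds
          exact le_of_tendsto' hdten (fun n => le_of_lt (hgo n))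
        have htri := dist_triangle a₀ gL a₁
        rw [dist_comm a₀ gL] at htri
        rw [hdist01] at htri
        linarith
      -- closed embedding of Y into the partition
      let eY : Y → ↥(U₁ᶜ) := fun y => ⟨⟨zfib ι X Y φ istar b' hb'φ y, hξC y⟩, hξP y⟩
      have heYcont : Continuous eY := by
        apply Continuous.subtype_mk; apply Continuous.subtype_mk
        exact zfib_continuous φ istar b' hb'φ
      have heYinj : Function.Injective eY := by
        intro y y' h
        exact zfib_injective φ istar b' hb'φ
          (congrArg Subtype.val (congrArg Subtype.val h))
      have hceY : IsClosedEmbedding eY := heYcont.isClosedEmbedding heYinj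
      have h5 := lindLE_of_closedEmbedding L β.1 _ _ _ _ eY hceY hβP
      have h6 := lind_le_of_lindLE (inferInstance : Nonempty Y) h5
      exact hfin _ β.1 (le_trans (min_le_right _ _) h6) β.2
    · -- Case B2 : the map extends fully over E_X, contradiction
      exfalso
      -- limits exist along sequences from V₁
      have hEx : ∀ x ∈ closure V₁, ∃ a : L, ∃ u : ℕ → X, (∀ k, u k ∈ V₁) ∧
          Filter.Tendsto u Filter.atTop (𝓝 x) ∧
          Filter.Tendsto (fun k => gv (u k)) Filter.atTop (𝓝 a) := by
        intro x hx
        obtain ⟨u, hu, hux⟩ := mem_closure_iff_seq_limit.mp hx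
        obtain ⟨a, -, ψ, hψ, hψa⟩ := IsCompact.tendsto_subseq (isCompact_univ (X := L))
          (fun k => Set.mem_univ (gv (u k)))
        exact ⟨a, u ∘ ψ, fun k => hu (ψ k), hux.comp hψ.tendsto_atTop, hψa⟩
      choose af uf huf1 huf2 huf3 using hEx
      set hfun : X → L := fun x =>
        if hx : x ∈ V₁ then gv x else
          if hx' : x ∈ closure V₁ then af x hx' else Classical.arbitrary L with hfundef
      -- uniqueness of sequential limits (from ¬B1)
      have huniq : ∀ (x : X), x ∈ closure V₁ → ∀ a a' : L,
          (∃ u : ℕ → X, (∀ k, u k ∈ V₁) ∧ Filter.Tendsto u Filter.atTop (𝓝 x) ∧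
            Filter.Tendsto (fun k => gv (u k)) Filter.atTop (𝓝 a)) →
          (∃ v : ℕ → X, (∀ k, v k ∈ V₁) ∧ Filter.Tendsto v Filter.atTop (𝓝 x) ∧
            Filter.Tendsto (fun k => gv (v k)) Filter.atTop (𝓝 a')) → a = a' := by
        rintro x hx a a' ⟨u, hu1, hu2, hu3⟩ ⟨v, hv1, hv2, hv3⟩
        by_cases hxV : x ∈ V₁
        · have h1 := tendsto_nhds_unique hu3 (hgv_tendsto x hxV u hu1 hu2)
          have h2 := tendsto_nhds_unique hv3 (hgv_tendsto x hxV v hv1 hv2)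
          rw [h1, h2]
        · by_contra hne
          exact hB1 ⟨x, a, a', u, v, hxV, hne, hu1, hv1, hu2, hv2, hu3, hv3⟩
      -- specification of hfun
      have hfun_spec : ∀ (x : X), x ∈ closure V₁ → ∃ u : ℕ → X, (∀ k, u k ∈ V₁) ∧
          Filter.Tendsto u Filter.atTop (𝓝 x) ∧
          Filter.Tendsto (fun k => gv (u k)) Filter.atTop (𝓝 (hfun x)) := by
        intro x hx
        by_cases hxV : x ∈ V₁
        · refine ⟨fun _ => x, fun _ => hxV, tendsto_const_nhds, ?_⟩
          have h1 : hfun x = gv x := dif_pos hxV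
          rw [h1]
          exact tendsto_const_nhds
        · have h1 : hfun x = af x hx := by
            rw [hfundef]
            simp only
            rw [dif_neg hxV, dif_pos hx]
          rw [h1]
          exact ⟨uf x hx, huf1 x hx, huf2 x hx, huf3 x hx⟩
      -- continuity of hfun on the closure of V₁
      haveI : FrechetUrysohnSpace ↥(closure V₁) := frechetUrysohn_subtype _
      have hcont : Continuous (fun w : ↥(closure V₁) => hfun (w : X)) := by
        apply SeqContinuous.continuous
        intro w wlim hwten
        by_contra hcon
        rw [Metric.tendsto_atTop] at hcon
        push_neg at hcon
        obtain ⟨ε, hε, hcon⟩ := hcon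
        obtain ⟨ψ, hψmono, hψ⟩ := Filter.extraction_of_frequently_atTop
          (Filter.frequently_atTop.mpr hcon)
        set Aset : Set X := {p | p ∈ V₁ ∧ ε / 2 ≤ dist (gv p) (hfun (wlim : X))}
          with hAsetdef
        have hcl : ∀ n : ℕ, ((w (ψ n) : ↥(closure V₁)) : X) ∈ closure Aset := by
          intro n
          have hdist : ε ≤ dist (hfun ((w (ψ n) : ↥(closure V₁)) : X)) (hfun (wlim : X)) :=
            hψ n
          by_cases hxkV : ((w (ψ n) : ↥(closure V₁)) : X) ∈ V₁
          · apply subset_closure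
            refine ⟨hxkV, ?_⟩
            have h1 : hfun ((w (ψ n) : ↥(closure V₁)) : X) =
                gv ((w (ψ n) : ↥(closure V₁)) : X) := dif_pos hxkV
            rw [h1] at hdist
            linarith
          · obtain ⟨u, hu1, hu2, hu3⟩ := hfun_spec _ (w (ψ n)).2
            have hev : ∀ᶠ j in Filter.atTop,
                dist (gv (u j)) (hfun ((w (ψ n) : ↥(closure V₁)) : X)) < ε / 2 := by
              obtain ⟨N, hN⟩ := Metric.tendsto_atTop.mp hu3 (ε / 2) (by linarith)
              exact Filter.eventually_atTop.mpr ⟨N, hN⟩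
            have hevA : ∀ᶠ j in Filter.atTop, u j ∈ Aset := by
              filter_upwards [hev] with j hj
              refine ⟨hu1 j, ?_⟩
              have htri := dist_triangle (hfun ((w (ψ n) : ↥(closure V₁)) : X))
                (gv (u j)) (hfun (wlim : X))
              have h2 : dist (hfun ((w (ψ n) : ↥(closure V₁)) : X)) (gv (u j)) < ε / 2 := by
                rw [dist_comm]; exact hj
              linarith
            exact mem_closure_of_tendsto hu2 hevA
        have hwmem : ((wlim : ↥(closure V₁)) : X) ∈ closure Aset := by
          have h1 : Filter.Tendsto (fun n => ((w (ψ n) : ↥(closure V₁)) : X))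
              Filter.atTop (𝓝 ((wlim : ↥(closure V₁)) : X)) := by
            have h2 : Filter.Tendsto (fun n => w (ψ n)) Filter.atTop (𝓝 wlim) :=
              hwten.comp hψmono.tendsto_atTop
            exact (continuous_subtype_val.tendsto wlim).comp h2
          have h3 := mem_closure_of_tendsto h1 (Filter.Eventually.of_forall hcl)
          rwa [closure_closure] at h3
        obtain ⟨qseq, hq, hqten⟩ := mem_closure_iff_seq_limit.mp hwmem
        obtain ⟨a', -, ψ', hψ', ha'⟩ := IsCompact.tendsto_subseq (isCompact_univ (X := L))
          (fun k => Set.mem_univ (gv (qseq k)))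
        have hq' : ∀ k, qseq (ψ' k) ∈ V₁ := fun k => (hq (ψ' k)).1
        have hq'dist : ε / 2 ≤ dist a' (hfun (wlim : X)) := by
          have h1 : ∀ k, ε / 2 ≤ dist (gv (qseq (ψ' k))) (hfun (wlim : X)) :=
            fun k => (hq (ψ' k)).2
          have hd : Filter.Tendsto (fun k => dist (gv (qseq (ψ' k))) (hfun (wlim : X)))
              Filter.atTop (𝓝 (dist a' (hfun (wlim : X)))) :=
            ha'.dist tendsto_const_nhds
          exact ge_of_tendsto' hd h1
        obtain ⟨u0, hu01, hu02, hu03⟩ := hfun_spec _ wlim.2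
        have heq := huniq _ wlim.2 a' (hfun (wlim : X))
          ⟨fun k => qseq (ψ' k), hq', hqten.comp hψ'.tendsto_atTop, ha'⟩
          ⟨u0, hu01, hu02, hu03⟩
        rw [heq, dist_self] at hq'dist
        linarith
      -- the resulting full extension over E_X contradicts the witness
      have hEcl : ∀ u : ↥E_X, (u : X) ∈ closure V₁ := fun u => hA _ u.2
      have hmemV₁F : ∀ (u : ↥E_X), u ∈ F_w → (u : X) ∈ V₁ := by
        intro u hu
        have hxF : (u : X) ∈ F_wX := ⟨u, hu, rfl⟩
        have h1 : (⟨zhat ι X Y φ y₀ (u : X), hzhatFhat _ hxF⟩ : ↥C) ∈ U₁ :=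
          hFU₁ (hmemFhat _ hxF)
        exact hmemU₁' _ (hE_V u.2) _ h1
      refine hNoExt ⟨fun u => hfun (u : X), ?_⟩ ?_
      · exact hcont.comp (Continuous.subtype_mk continuous_subtype_val hEcl)
      · intro u hu
        show hfun (u : X) = f_w ⟨u, hu⟩
        have h1 : hfun (u : X) = gv (u : X) := dif_pos (hmemV₁F u hu)
        rw [h1]
        exact hgF u hu (hmemV₁F u hu)

end
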